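/- arXiv:1409.2052 — 10 statements merged into one kernel-verified Lean document; each statement's English description precedes it below -/
import Mathlib

section
/- Under the holonomy relations, for every z ∈ V with α(z) ≠ 0 for all α ∈ Δ, the Gaudin hamiltonians H(w) = Σ_{α∈Δ} (α(w)/α(z))·t_α, w ∈ V, pairwise commute: [H(w), H(w')] = 0 for all w, w' ∈ V. -/
open Module Submodule Finset

private lemma gaudin_sum_lie {L : Type*} [LieRing L] {ι : Type*}
    (S : Finset ι) (t : ι → L) (x : L) :
    ⁅∑ i ∈ S, t i, x⁆ = ∑ i ∈ S, ⁅t i, x⁆ := by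
  induction S using Finset.cons_induction with
  | empty => simp
  | cons a s ha ih => simp [Finset.sum_cons, add_lie, ih]

private lemma gaudin_lie_sum {L : Type*} [LieRing L] {ι : Type*}
    (S : Finset ι) (t : ι → L) (x : L) :
    ⁅x, ∑ i ∈ S, t i⁆ = ∑ i ∈ S, ⁅x, t i⁆ := by
  induction S using Finset.cons_induction with
  | empty => simp
  | cons a s ha ih => simp [Finset.sum_cons, lie_add, ih]

/-- Bilinear expansion of a bracket of two linear combinations. -/
lemma gaudin_bracket_expand {L : Type*} [LieRing L] [LieAlgebra ℂ L]
    {ι : Type*} (S : Finset ι) (t : ι → L) (f g : ι → ℂ) :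
    ⁅∑ i ∈ S, f i • t i, ∑ j ∈ S, g j • t j⁆
      = ∑ p ∈ S ×ˢ S, (f p.1 * g p.2) • ⁅t p.1, t p.2⁆ := by
  rw [Finset.sum_product, gaudin_sum_lie]
  refine Finset.sum_congr rfl fun α _ => ?_
  rw [gaudin_lie_sum]
  refine Finset.sum_congr rfl fun β _ => ?_
  rw [smul_lie, lie_smul, smul_smul]

/-- In a single "plane", if each `t i` commutes with the total sum, then any two
affine combinations (in a common coordinate `s`) commute. -/
lemma gaudin_plane_zero {L : Type*} [LieRing L] [LieAlgebra ℂ L]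
    {ι : Type*} (S : Finset ι) (t : ι → L)
    (hR : ∀ i ∈ S, ⁅t i, ∑ j ∈ S, t j⁆ = 0)
    (s : ι → ℂ) (p q p' q' : ℂ) :
    ⁅∑ i ∈ S, (p + s i * q) • t i, ∑ i ∈ S, (p' + s i * q') • t i⁆ = 0 := by
  set T := ∑ j ∈ S, t j with hT
  set U := ∑ j ∈ S, s j • t j with hU
  have hUT : ⁅U, T⁆ = 0 := by
    rw [hU, gaudin_sum_lie]
    exact Finset.sum_eq_zero fun i hi => by rw [smul_lie, hR i hi, smul_zero]
  have hTU : ⁅T, U⁆ = 0 := by rw [← lie_skew, hUT, neg_zero]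
  have h1 : ∀ (a b : ℂ), ∑ i ∈ S, (a + s i * b) • t i = a • T + b • U := by
    intro a b
    rw [hT, hU, Finset.smul_sum, Finset.smul_sum, ← Finset.sum_add_distrib]
    refine Finset.sum_congr rfl fun i _ => ?_
    rw [add_smul, mul_comm, mul_smul, smul_comm b (s i)]
  rw [h1, h1]
  simp [lie_add, add_lie, lie_smul, smul_lie, hUT, hTU]

open Classical in
/-- Under the holonomy relations, the Gaudin hamiltonians
`H(w) = ∑_{α ∈ Δ} (α(w)/α(z)) • t_α` pairwise commute, for every `z` off the
arrangement. -/
theorem gaudin_hamiltonians_commute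
    {V : Type*} [AddCommGroup V] [Module ℂ V] [FiniteDimensional ℂ V]
    {L : Type*} [LieRing L] [LieAlgebra ℂ L]
    (Δ : Finset (Module.Dual ℂ V))
    (hne : ∀ α ∈ Δ, α ≠ 0)
    (hprop : ∀ α ∈ Δ, ∀ β ∈ Δ, ∀ c : ℂ, β = c • α → α = β)
    (hspan : Submodule.span ℂ (Δ : Set (Module.Dual ℂ V)) = ⊤)
    (t : Module.Dual ℂ V → L)
    (holonomy : ∀ α ∈ Δ, ∀ W : Submodule ℂ (Module.Dual ℂ V),
      Module.finrank ℂ W = 2 → α ∈ W →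
      ⁅t α, ∑ β ∈ Δ.filter (fun β => β ∈ W), t β⁆ = 0)
    (z : V) (hz : ∀ α ∈ Δ, α z ≠ 0) (w w' : V) :
    ⁅∑ α ∈ Δ, (α w / α z) • t α, ∑ α ∈ Δ, (α w' / α z) • t α⁆ = 0 := by
  -- notation
  set f : Module.Dual ℂ V → ℂ := fun α => α w / α z with hfdef
  set g : Module.Dual ℂ V → ℂ := fun α => α w' / α z with hgdef
  -- linear independence of distinct roots
  have hind : ∀ α ∈ Δ, ∀ β ∈ Δ, α ≠ β → LinearIndependent ℂ ![α, β] := by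
    intro α hα β hβ hab
    rw [LinearIndependent.pair_iff]
    intro a b hab0
    rcases eq_or_ne b 0 with hb | hb
    · subst hb
      rw [zero_smul, add_zero] at hab0
      rcases smul_eq_zero.mp hab0 with ha | h0
      · exact ⟨ha, rfl⟩
      · exact absurd h0 (hne α hα)
    · exfalso
      apply hab
      refine hprop α hα β hβ (b⁻¹ * (-a)) ?_
      have : b • β = (-a) • α := by
        rw [neg_smul]
        linear_combination (norm := module) hab0
      rw [mul_smul, ← this, inv_smul_smul₀ hb]
  have hspan2 : ∀ α ∈ Δ, ∀ β ∈ Δ, α ≠ β →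
      Module.finrank ℂ (Submodule.span ℂ ({α, β} : Set (Module.Dual ℂ V))) = 2 := by
    intro α hα β hβ hab
    have hr : ({α, β} : Set (Module.Dual ℂ V)) = Set.range ![α, β] := by
      ext x
      simp [Fin.exists_fin_two, eq_comm, or_comm]
    rw [hr, finrank_span_eq_card (hind α hα β hβ hab)]
    simp
  -- expand
  rw [gaudin_bracket_expand Δ t f g]
  -- split off the diagonal
  rw [← Finset.sum_filter_add_sum_filter_not (Δ ×ˢ Δ)
    (fun p => p.1 = p.2) (fun p => (f p.1 * g p.2) • ⁅t p.1, t p.2⁆)]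
  have hdiag : ∑ p ∈ (Δ ×ˢ Δ).filter (fun p => p.1 = p.2),
      (f p.1 * g p.2) • ⁅t p.1, t p.2⁆ = 0 := by
    refine Finset.sum_eq_zero fun p hp => ?_
    have h12 : p.1 = p.2 := (Finset.mem_filter.mp hp).2
    rw [h12, lie_self, smul_zero]
  rw [hdiag, zero_add]
  -- group the off-diagonal pairs by the plane they span
  set O := (Δ ×ˢ Δ).filter (fun p => ¬ p.1 = p.2) with hO
  set sp : Module.Dual ℂ V × Module.Dual ℂ V → Submodule ℂ (Module.Dual ℂ V) :=
    fun p => Submodule.span ℂ ({p.1, p.2} : Set (Module.Dual ℂ V)) with hsp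
  rw [← Finset.sum_fiberwise_of_maps_to
    (fun p hp => Finset.mem_image_of_mem sp hp)
    (fun p => (f p.1 * g p.2) • ⁅t p.1, t p.2⁆)]
  refine Finset.sum_eq_zero fun W hW => ?_
  obtain ⟨p0, hp0, hsp0⟩ := Finset.mem_image.mp hW
  have hp0' := Finset.mem_filter.mp hp0
  have hp0prod := Finset.mem_product.mp hp0'.1
  have hα1 : p0.1 ∈ Δ := hp0prod.1
  have hβ1 : p0.2 ∈ Δ := hp0prod.2
  have hab1 : p0.1 ≠ p0.2 := hp0'.2
  have hW2 : Module.finrank ℂ W = 2 := by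
    rw [← hsp0]
    exact hspan2 _ hα1 _ hβ1 hab1
  -- the fiber over W is the set of distinct pairs from Δ ∩ W
  set ΔW := Δ.filter (fun β => β ∈ W) with hΔW
  have hfib : O.filter (fun p => sp p = W)
      = (ΔW ×ˢ ΔW).filter (fun p => ¬ p.1 = p.2) := by
    ext p
    simp only [hO, hΔW, hsp, Finset.mem_filter, Finset.mem_product]
    constructor
    · rintro ⟨⟨⟨h1, h2⟩, hne12⟩, hspw⟩
      have hm1 : p.1 ∈ W := by
        rw [← hspw]; exact Submodule.subset_span (by simp)
      have hm2 : p.2 ∈ W := by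
        rw [← hspw]; exact Submodule.subset_span (by simp)
      exact ⟨⟨⟨h1, hm1⟩, h2, hm2⟩, hne12⟩
    · rintro ⟨⟨⟨h1, hm1⟩, h2, hm2⟩, hne12⟩
      refine ⟨⟨⟨h1, h2⟩, hne12⟩, ?_⟩
      refine Submodule.eq_of_le_of_finrank_le ?_ ?_
      · rw [Submodule.span_le]
        rintro x hx
        rcases hx with hx | hx
        · simpa [hx] using hm1
        · simp only [Set.mem_singleton_iff] at hx
          simpa [hx] using hm2
      · rw [hW2, hspan2 _ h1 _ h2 hne12]
  rw [hfib]
  -- add back the (vanishing) diagonal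
  have hre : ∑ p ∈ (ΔW ×ˢ ΔW).filter (fun p => ¬ p.1 = p.2),
      (f p.1 * g p.2) • ⁅t p.1, t p.2⁆
      = ∑ p ∈ ΔW ×ˢ ΔW, (f p.1 * g p.2) • ⁅t p.1, t p.2⁆ := by
    refine Finset.sum_filter_of_ne fun p hp hne0 => ?_
    intro h12
    exact hne0 (by rw [h12, lie_self, smul_zero])
  rw [hre, ← gaudin_bracket_expand ΔW t f g]
  -- normalized roots lie on an affine line inside W
  set n : Module.Dual ℂ V → Module.Dual ℂ V := fun β => (β z)⁻¹ • β with hn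
  have hn1 : ∀ β ∈ Δ, (n β) z = 1 := by
    intro β hβ
    simp only [hn, LinearMap.smul_apply, smul_eq_mul]
    exact inv_mul_cancel₀ (hz β hβ)
  have hα0 : p0.1 ∈ ΔW := by
    rw [hΔW, Finset.mem_filter]
    refine ⟨hα1, ?_⟩
    rw [← hsp0]; exact Submodule.subset_span (by simp)
  set α0 := p0.1 with hα0def
  set K := W ⊓ LinearMap.ker (Module.Dual.eval ℂ V z) with hK
  have hnW : ∀ β ∈ ΔW, n β ∈ W := by
    intro β hβ
    exact Submodule.smul_mem _ _ ((Finset.mem_filter.mp hβ).2)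
  have hνK : ∀ β ∈ ΔW, n β - n α0 ∈ K := by
    intro β hβ
    refine Submodule.mem_inf.mpr ⟨Submodule.sub_mem _ (hnW β hβ) (hnW α0 hα0), ?_⟩
    rw [LinearMap.mem_ker]
    have : (Module.Dual.eval ℂ V z) (n β - n α0) = (n β) z - (n α0) z := by
      simp [Module.Dual.eval]
    rw [this, hn1 β (Finset.mem_filter.mp hβ).1, hn1 α0 hα1, sub_self]
  have hK1 : Module.finrank ℂ K ≤ 1 := by
    have hKW : K < W := by
      refine lt_of_le_of_ne inf_le_left fun hKeq => ?_
      have hmem : n α0 ∈ K := hKeq ▸ hnW α0 hα0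
      have := (LinearMap.mem_ker.mp (Submodule.mem_inf.mp hmem).2)
      have heval : (Module.Dual.eval ℂ V z) (n α0) = (n α0) z := by
        simp [Module.Dual.eval]
      rw [heval, hn1 α0 hα1] at this
      exact one_ne_zero this
    have := Submodule.finrank_lt_finrank_of_lt hKW
    omega
  -- obtain the affine coordinate
  obtain ⟨μ, s, hs⟩ : ∃ (μ : Module.Dual ℂ V) (s : Module.Dual ℂ V → ℂ),
      ∀ β ∈ ΔW, n β = n α0 + s β • μ := by
    by_cases hall : ∀ β ∈ ΔW, n β = n α0
    · exact ⟨0, fun _ => 0, fun β hβ => by rw [hall β hβ]; simp⟩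
    · push_neg at hall
      obtain ⟨β1, hβ1', hne1⟩ := hall
      set μ := n β1 - n α0 with hμ
      have hμ0 : μ ≠ 0 := sub_ne_zero.mpr hne1
      have hμK : μ ∈ K := hνK β1 hβ1'
      have hKeq : Submodule.span ℂ ({μ} : Set (Module.Dual ℂ V)) = K := by
        refine Submodule.eq_of_le_of_finrank_le ?_ ?_
        · rw [Submodule.span_le, Set.singleton_subset_iff]; exact hμK
        · rw [finrank_span_singleton hμ0]; exact hK1
      have hmem : ∀ β : Module.Dual ℂ V, ∃ a : ℂ, β ∈ ΔW → a • μ = n β - n α0 := by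
        intro β
        by_cases hβ : β ∈ ΔW
        · obtain ⟨a, ha⟩ := Submodule.mem_span_singleton.mp (hKeq ▸ hνK β hβ)
          exact ⟨a, fun _ => ha⟩
        · exact ⟨0, fun h => absurd h hβ⟩
      choose s hs' using hmem
      refine ⟨μ, s, fun β hβ => ?_⟩
      rw [hs' β hβ]
      abel
  -- identify f and g as affine functions of s on ΔW
  have hf' : ∀ β ∈ ΔW, f β = (n α0) w + s β * (μ w) := by
    intro β hβ
    have hβΔ := (Finset.mem_filter.mp hβ).1
    have : f β = (n β) w := by
      simp only [hfdef, hn, LinearMap.smul_apply, smul_eq_mul, div_eq_inv_mul]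
    rw [this, hs β hβ]
    simp
  have hg' : ∀ β ∈ ΔW, g β = (n α0) w' + s β * (μ w') := by
    intro β hβ
    have : g β = (n β) w' := by
      simp only [hgdef, hn, LinearMap.smul_apply, smul_eq_mul, div_eq_inv_mul]
    rw [this, hs β hβ]
    simp
  have e1 : ∑ β ∈ ΔW, f β • t β = ∑ β ∈ ΔW, ((n α0) w + s β * μ w) • t β :=
    Finset.sum_congr rfl fun β hβ => by rw [hf' β hβ]
  have e2 : ∑ β ∈ ΔW, g β • t β = ∑ β ∈ ΔW, ((n α0) w' + s β * μ w') • t β :=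
    Finset.sum_congr rfl fun β hβ => by rw [hg' β hβ]
  rw [e1, e2]
  refine gaudin_plane_zero ΔW t ?_ s _ _ _ _
  intro β hβ
  have hβ' := Finset.mem_filter.mp hβ
  exact holonomy β hβ'.1 W hW2 hβ'.2
end

section
/- Suppose Δ contains a subset B that is a basis of V* and an element θ ∈ Δ whose coefficients n_{θ,β} in the expansion θ = Σ_{β∈B} n_{θ,β} β are all nonzero. If z, z' ∈ V satisfy α(z) ≠ 0 and α(z') ≠ 0 for all α ∈ Δ and the spans G(z) and G(z') of the corresponding Gaudin hamiltonians coincide as subspaces of ℂ^Δ, then z' = λ·z for some nonzero scalar λ. -/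
/-- If `Δ` contains a basis `B` of `V*` and a vector `θ` whose expansion in `B`
has all coefficients nonzero, then the span of the Gaudin hamiltonians `G(z)`
determines `z` up to a nonzero scalar. -/
theorem gaudin_span_determines_point
    {V : Type*} [AddCommGroup V] [Module ℂ V] [FiniteDimensional ℂ V]
    (Δ : Finset (Module.Dual ℂ V))
    (hne : ∀ α ∈ Δ, α ≠ 0)
    (hprop : ∀ α ∈ Δ, ∀ β ∈ Δ, ∀ c : ℂ, β = c • α → α = β)
    (hspan : Submodule.span ℂ (Δ : Set (Module.Dual ℂ V)) = ⊤)
    (B : Finset (Module.Dual ℂ V)) (hBΔ : B ⊆ Δ)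
    (hBind : LinearIndependent ℂ (fun β : {β // β ∈ B} => (β : Module.Dual ℂ V)))
    (hBspan : Submodule.span ℂ (B : Set (Module.Dual ℂ V)) = ⊤)
    (n : Module.Dual ℂ V → Module.Dual ℂ V → ℂ)
    (hn : ∀ α ∈ Δ, α = ∑ β ∈ B, n α β • β)
    (θ : Module.Dual ℂ V) (hθ : θ ∈ Δ) (hθn : ∀ β ∈ B, n θ β ≠ 0)
    (z z' : V) (hz : ∀ α ∈ Δ, α z ≠ 0) (hz' : ∀ α ∈ Δ, α z' ≠ 0)
    (hGG : Submodule.span ℂ (Set.range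
        (fun w : V => fun α : {α // α ∈ Δ} =>
          (α : Module.Dual ℂ V) w / (α : Module.Dual ℂ V) z)) =
      Submodule.span ℂ (Set.range
        (fun w : V => fun α : {α // α ∈ Δ} =>
          (α : Module.Dual ℂ V) w / (α : Module.Dual ℂ V) z'))) :
    ∃ lam : ℂ, lam ≠ 0 ∧ z' = lam • z := by
  classical
  have hθz := hz θ hθ
  have hθz' := hz' θ hθ
  -- basis of the dual space from B
  have hBspan' : ⊤ ≤ Submodule.span ℂ
      (Set.range (fun β : {β // β ∈ B} => (β : Module.Dual ℂ V))) := by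
    simp only [Subtype.range_coe_subtype]; exact hBspan.ge
  let b : Module.Basis {β // β ∈ B} ℂ (Module.Dual ℂ V) := Module.Basis.mk hBind hBspan'
  -- the linear map w ↦ (α w / α z)
  set F : V →ₗ[ℂ] ({α // α ∈ Δ} → ℂ) :=
    LinearMap.pi (fun α : {α // α ∈ Δ} => ((α : Module.Dual ℂ V) z)⁻¹ • (α : Module.Dual ℂ V))
    with hF
  have hFfun : (fun w : V => fun α : {α // α ∈ Δ} =>
      (α : Module.Dual ℂ V) w / (α : Module.Dual ℂ V) z) = ⇑F := by
    funext w α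
    simp [hF, div_eq_inv_mul, mul_comm]
  -- key claim: for each β ∈ B, β z * θ z' = θ z * β z'
  have key : ∀ β ∈ B, β z * θ z' = θ z * β z' := by
    intro β hβ
    have hβΔ : β ∈ Δ := hBΔ hβ
    -- the vector e with γ e = δ_{γβ} for γ ∈ B
    set e : V := (Module.evalEquiv ℂ V).symm (b.dualBasis ⟨β, hβ⟩) with he
    have hev : ∀ γ (hγ : γ ∈ B), γ e = if γ = β then 1 else 0 := by
      intro γ hγ
      rw [he, Module.apply_evalEquiv_symm_apply]
      conv_lhs => rw [show γ = b ⟨γ, hγ⟩ from (Module.Basis.mk_apply hBind hBspan' ⟨γ, hγ⟩).symm]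
      rw [Module.Basis.dualBasis_apply_self]
      simp [Subtype.ext_iff]
    -- the vector (α e / α z') lies in G(z') hence in G(z)
    have hmem : (fun α : {α // α ∈ Δ} =>
        (α : Module.Dual ℂ V) e / (α : Module.Dual ℂ V) z') ∈
        Submodule.span ℂ (Set.range
          (fun w : V => fun α : {α // α ∈ Δ} =>
            (α : Module.Dual ℂ V) w / (α : Module.Dual ℂ V) z)) := by
      rw [hGG]
      exact Submodule.subset_span ⟨e, rfl⟩
    rw [hFfun, ← LinearMap.coe_range F, Submodule.span_eq] at hmem
    obtain ⟨u, hu⟩ := hmem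
    have hu' : ∀ α, α ∈ Δ → ((α : Module.Dual ℂ V) z)⁻¹ * α u = α e / α z' :=
      fun α hα => congrFun hu ⟨α, hα⟩
    -- clear denominators
    have h2 : ∀ α, α ∈ Δ → α z' * α u = α z * α e := by
      intro α hα
      have h := hu' α hα
      field_simp [hz α hα, hz' α hα] at h
      first
        | linear_combination h
        | linear_combination -h
    -- values of u on B
    have hβu : β z' * β u = β z := by
      have := h2 β hβΔ
      rw [hev β hβ] at this
      simpa using this
    have hγu : ∀ γ ∈ B, γ ≠ β → γ u = 0 := by
      intro γ hγ hne'
      have := h2 γ (hBΔ hγ)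
      rw [hev γ hγ, if_neg hne'] at this
      rw [mul_zero] at this
      exact (mul_eq_zero.mp this).resolve_left (hz' γ (hBΔ hγ))
    -- value of θ on e and u
    have hθe : θ e = n θ β := by
      conv_lhs => rw [hn θ hθ]
      rw [LinearMap.sum_apply]
      rw [Finset.sum_congr rfl (fun γ hγ => by
        rw [LinearMap.smul_apply, hev γ hγ, smul_eq_mul])]
      simp [hβ]
    have hθu : θ u = n θ β * β u := by
      conv_lhs => rw [hn θ hθ]
      rw [LinearMap.sum_apply]
      rw [Finset.sum_congr rfl (fun γ hγ => by rw [LinearMap.smul_apply, smul_eq_mul])]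
      rw [Finset.sum_eq_single β (fun γ hγ hne' => by rw [hγu γ hγ hne', mul_zero])
        (fun h => absurd hβ h)]
    have hθ2 : θ z' * θ u = θ z * n θ β := by rw [h2 θ hθ, hθe]
    -- combine: cancel n θ β
    have hcancel : n θ β * (θ z' * β u) = n θ β * θ z := by
      linear_combination hθ2 - θ z' * hθu
    have h3 : θ z' * β u = θ z := mul_left_cancel₀ (hθn β hβ) hcancel
    -- now β z * θ z' = θ z * β z'
    linear_combination β z' * h3 - θ z' * hβu
  -- conclude
  refine ⟨θ z' / θ z, div_ne_zero hθz' hθz, ?_⟩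
  have hzero : z' - (θ z' / θ z) • z = 0 := by
    rw [← Module.forall_dual_apply_eq_zero_iff ℂ]
    intro f
    have hf : f ∈ Submodule.span ℂ (B : Set (Module.Dual ℂ V)) := by
      rw [hBspan]; trivial
    induction hf using Submodule.span_induction with
    | mem g hg =>
        have hkey := key g hg
        have : g (z' - (θ z' / θ z) • z) = g z' - (θ z' / θ z) * g z := by
          simp [map_sub, map_smul, smul_eq_mul]
        rw [this]
        field_simp
        linear_combination -hkey
    | zero => simp
    | add g h _ _ hg hh => simp [hg, hh]
    | smul c g _ hg => simp [hg]
  have := sub_eq_zero.mp hzero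
  exact this
end

section
/- Let S be a nested set for Δ containing Δ itself, and let α ∈ Δ. Then the set of flats A ∈ S with α ∈ A is nonempty and totally ordered by inclusion; in particular there is a unique minimal flat A_S(α) ∈ S containing α. -/
/-- `A` is a flat of the arrangement `Δ`: a nonempty subset of `Δ` with
`span(A) ∩ Δ = A`. -/
def IsFlat {D : Type*} [AddCommGroup D] [Module ℂ D] (Δ A : Finset D) : Prop :=
  A.Nonempty ∧ A ⊆ Δ ∧ ∀ α ∈ Δ, α ∈ Submodule.span ℂ (A : Set D) → α ∈ A

/-- A flat is irreducible if it is not the union of two flats whose spans form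
a direct sum decomposition of its span. -/
def IsIrreducibleFlat {D : Type*} [AddCommGroup D] [Module ℂ D] [DecidableEq D]
    (Δ A : Finset D) : Prop :=
  IsFlat Δ A ∧
    ¬ ∃ A₁ A₂ : Finset D, IsFlat Δ A₁ ∧ IsFlat Δ A₂ ∧ A₁ ∪ A₂ = A ∧
      Disjoint (Submodule.span ℂ (A₁ : Set D)) (Submodule.span ℂ (A₂ : Set D)) ∧
      Submodule.span ℂ (A₁ : Set D) ⊔ Submodule.span ℂ (A₂ : Set D) =
        Submodule.span ℂ (A : Set D)

/-- A nested set for `Δ`: a set of irreducible flats such that the spans of any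
family of pairwise non-comparable members form a direct sum. -/
def IsNestedSet {D : Type*} [AddCommGroup D] [Module ℂ D] [DecidableEq D]
    (Δ : Finset D) (S : Finset (Finset D)) : Prop :=
  (∀ A ∈ S, IsIrreducibleFlat Δ A) ∧
  ∀ T : Finset (Finset D), T ⊆ S →
    (∀ A ∈ T, ∀ B ∈ T, A ≠ B → ¬ A ⊆ B) →
    iSupIndep (fun A : {x // x ∈ T} => Submodule.span ℂ ((A : Finset D) : Set D)) ∧
    (⨆ A : {x // x ∈ T}, Submodule.span ℂ ((A : Finset D) : Set D)) =
      Submodule.span ℂ ((T.biUnion id : Finset D) : Set D)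

open Classical in
/-- For a nested set `S` containing `Δ` and `α ∈ Δ`, the flats of `S`
containing `α` are nonempty and linearly ordered by inclusion; in particular
there is a unique minimal flat in `S` containing `α`. -/
theorem nested_set_flats_containing_linearly_ordered
    {V : Type*} [AddCommGroup V] [Module ℂ V] [FiniteDimensional ℂ V]
    (Δ : Finset (Module.Dual ℂ V))
    (hne : ∀ α ∈ Δ, α ≠ 0)
    (hprop : ∀ α ∈ Δ, ∀ β ∈ Δ, ∀ c : ℂ, β = c • α → α = β)
    (hspan : Submodule.span ℂ (Δ : Set (Module.Dual ℂ V)) = ⊤)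
    (S : Finset (Finset (Module.Dual ℂ V)))
    (hS : IsNestedSet Δ S) (hΔS : Δ ∈ S)
    (α : Module.Dual ℂ V) (hα : α ∈ Δ) :
    (∃ A ∈ S, α ∈ A) ∧
    (∀ A ∈ S, α ∈ A → ∀ B ∈ S, α ∈ B → A ⊆ B ∨ B ⊆ A) ∧
    (∃! A₀ : Finset (Module.Dual ℂ V),
      A₀ ∈ S ∧ α ∈ A₀ ∧ ∀ B ∈ S, α ∈ B → A₀ ⊆ B) := by
  have htot : ∀ A ∈ S, α ∈ A → ∀ B ∈ S, α ∈ B → A ⊆ B ∨ B ⊆ A := by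
    intro A hA hαA B hB hαB
    by_contra h
    push_neg at h
    obtain ⟨hAB, hBA⟩ := h
    have hne' : A ≠ B := fun e => hAB (e ▸ Finset.Subset.refl A)
    have hT : ({A, B} : Finset (Finset _)) ⊆ S := by
      intro X hX; simp only [Finset.mem_insert, Finset.mem_singleton] at hX
      rcases hX with rfl | rfl <;> assumption
    obtain ⟨hindep, -⟩ := hS.2 {A, B} hT (by
      intro X hX Y hY hXY
      simp only [Finset.mem_insert, Finset.mem_singleton] at hX hY
      rcases hX with rfl | rfl <;> rcases hY with rfl | rfl <;>
        first | exact absurd rfl hXY | assumption)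
    have hAm : A ∈ ({A, B} : Finset (Finset _)) := by simp
    have hBm : B ∈ ({A, B} : Finset (Finset _)) := by simp
    have hne'' : (⟨A, hAm⟩ : {x // x ∈ ({A, B} : Finset (Finset _))}) ≠ ⟨B, hBm⟩ := by
      simpa [Subtype.ext_iff] using hne'
    have hd := hindep.pairwiseDisjoint hne''
    have hz : α = 0 := (Submodule.disjoint_def.mp hd) α
      (Submodule.subset_span hαA) (Submodule.subset_span hαB)
    exact hne α hα hz
  refine ⟨⟨Δ, hΔS, hα⟩, htot, ?_⟩
  set P := S.filter (fun A => α ∈ A) with hP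
  have hPne : P.Nonempty := ⟨Δ, by simp [hP, hΔS, hα]⟩
  obtain ⟨A₀, hA₀P, hminP⟩ := Finset.exists_minimal hPne
  have hA₀S : A₀ ∈ S := (Finset.mem_filter.mp hA₀P).1
  have hαA₀ : α ∈ A₀ := by
    have := (Finset.mem_filter.mp hA₀P).2
    simpa using this
  have hmin : ∀ B ∈ S, α ∈ B → A₀ ⊆ B := by
    intro B hB hαB
    rcases htot A₀ hA₀S hαA₀ B hB hαB with h | h
    · exact h
    · by_contra hc
      have hneq : B ≠ A₀ := fun e => hc (e ▸ h)
      exact (lt_of_le_of_ne h hneq).not_ge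
        (hminP (Finset.mem_filter.mpr ⟨hB, by simpa using hαB⟩) h)
  refine ⟨A₀, ⟨hA₀S, hαA₀, hmin⟩, ?_⟩
  rintro A₁ ⟨hA₁S, hαA₁, hmin₁⟩
  exact Finset.Subset.antisymm (hmin₁ A₀ hA₀S hαA₀) (hmin A₁ hA₁S hαA₁)
end

section
/- Let α₁, …, α_r be a linearly independent family of nonzero vectors in E with (α_i, α_j) ≤ 0 for all i ≠ j, and suppose that for each i ≥ 2 there exists j < i with (α_i, α_j) < 0. Let s_i denote the orthogonal reflection in the hyperplane perpendicular to α_i. Then for each i = 1, …, r the vector v_i := s_i s_{i−1} ⋯ s_2 α₁ is a linear combination of α₁, …, α_i with all coefficients strictly positive; in particular s_r ⋯ s_2 α₁ is a linear combination of α₁, …, α_r with all coefficients strictly positive. -/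
open scoped RealInnerProductSpace

/-- The orthogonal reflection of `v` in the hyperplane perpendicular to `α`. -/
noncomputable def reflVec {E : Type*} [NormedAddCommGroup E]
    [InnerProductSpace ℝ E] (α v : E) : E :=
  v - (2 * ⟪α, v⟫ / ⟪α, α⟫) • α

/-- `iterRefl α i = s_{α i} ⋯ s_{α 1} (α 0)`, the iterated reflection of the
first vector by the subsequent ones. -/
noncomputable def iterRefl {E : Type*} [NormedAddCommGroup E]
    [InnerProductSpace ℝ E] (α : ℕ → E) : ℕ → E
  | 0 => α 0
  | i + 1 => reflVec (α (i + 1)) (iterRefl α i)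

/-- If `α 0, …, α (r-1)` are linearly independent with pairwise nonpositive
inner products, and each (other than the first) is non-orthogonal to an
earlier one, then each iterated reflection `s_i ⋯ s_2 α₁` is a strictly
positive linear combination of `α 0, …, α i`. -/
theorem iterated_reflection_positive_coefficients
    {E : Type*} [NormedAddCommGroup E] [InnerProductSpace ℝ E]
    [FiniteDimensional ℝ E]
    (r : ℕ) (α : ℕ → E)
    (hind : LinearIndependent ℝ (fun i : Fin r => α i))
    (hne : ∀ i < r, α i ≠ 0)
    (hobtuse : ∀ i < r, ∀ j < r, i ≠ j → ⟪α i, α j⟫ ≤ 0)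
    (hconn : ∀ i, 0 < i → i < r → ∃ j < i, ⟪α j, α i⟫ < 0) :
    ∀ i < r, ∃ c : ℕ → ℝ, (∀ j ≤ i, 0 < c j) ∧
      iterRefl α i = ∑ j ∈ Finset.range (i + 1), c j • α j := by
  intro i
  induction i with
  | zero =>
    intro _
    exact ⟨fun _ => 1, fun _ _ => one_pos, by simp [iterRefl]⟩
  | succ n ih =>
    intro hn1
    have hnr : n < r := Nat.lt_of_succ_lt hn1
    obtain ⟨c, hc, hsum⟩ := ih hnr
    set t : ℝ := -(2 * ⟪α (n + 1), iterRefl α n⟫ / ⟪α (n + 1), α (n + 1)⟫) with ht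
    have hden : (0:ℝ) < ⟪α (n + 1), α (n + 1)⟫ := by
      rw [real_inner_self_eq_norm_sq]
      have := norm_pos_iff.mpr (hne _ hn1)
      positivity
    have hinner : ⟪α (n + 1), iterRefl α n⟫
        = ∑ j ∈ Finset.range (n + 1), c j * ⟪α (n + 1), α j⟫ := by
      rw [hsum, inner_sum]
      exact Finset.sum_congr rfl fun j _ => real_inner_smul_right _ _ _
    have hneg : ⟪α (n + 1), iterRefl α n⟫ < 0 := by
      rw [hinner]
      obtain ⟨j₀, hj₀, hj₀neg⟩ := hconn (n + 1) (Nat.succ_pos n) hn1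
      have : ∑ j ∈ Finset.range (n + 1), c j * ⟪α (n + 1), α j⟫
          < ∑ j ∈ Finset.range (n + 1), (0:ℝ) := by
        apply Finset.sum_lt_sum
        · intro j hj
          have hj' : j ≤ n := Nat.lt_succ_iff.mp (Finset.mem_range.mp hj)
          have h1 : ⟪α (n + 1), α j⟫ ≤ 0 :=
            hobtuse _ hn1 _ (lt_of_le_of_lt hj' hnr) (by omega)
          exact mul_nonpos_of_nonneg_of_nonpos (hc j hj').le h1
        · refine ⟨j₀, Finset.mem_range.mpr hj₀, ?_⟩
          have h1 : ⟪α (n + 1), α j₀⟫ < 0 := by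
            rwa [real_inner_comm]
          exact mul_neg_of_pos_of_neg (hc j₀ (Nat.lt_succ_iff.mp hj₀)) h1
      simpa using this
    have htpos : 0 < t := by
      rw [ht, neg_pos]
      exact div_neg_of_neg_of_pos (by linarith) hden
    refine ⟨fun j => if j = n + 1 then t else c j, ?_, ?_⟩
    · intro j hj
      by_cases h : j = n + 1
      · simpa [h] using htpos
      · simpa [h] using hc j (by omega)
    · show iterRefl α (n + 1) = _
      rw [Finset.sum_range_succ]
      have h1 : ∀ j ∈ Finset.range (n + 1),
          (if j = n + 1 then t else c j) • α j = c j • α j := by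
        intro j hj
        have : j ≠ n + 1 := by have := Finset.mem_range.mp hj; omega
        simp [this]
      rw [Finset.sum_congr rfl h1, ← hsum]
      beta_reduce
      rw [if_pos rfl]
      show reflVec (α (n + 1)) (iterRefl α n) = _
      rw [reflVec, ht]
      module
end

section
/- Let Φ be a Coxeter root system in E, Δ ⊆ Φ a positive system (i.e., Φ is the disjoint union of Δ and −Δ), G the group of orthogonal transformations of E generated by the reflections s_α, α ∈ Φ, and k : Φ → ℂ a function with k_{−α} = k_α and k_{gα} = k_α for all α ∈ Φ, g ∈ G. Then in the group algebra ℂ[G], regarded as a Lie algebra with the commutator bracket, for every α ∈ Δ and every 2-dimensional subspace P ⊆ E containing α, one has [k_α s_α, Σ_{β ∈ Δ∩P} k_β s_β] = 0; that is, the elements t_α = k_α s_α satisfy the holonomy relations of the reflection arrangement. -/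
open scoped RealInnerProductSpace

section Helpers

variable {E : Type*} [NormedAddCommGroup E] [InnerProductSpace ℝ E] [FiniteDimensional ℝ E]

private lemma reflection_congr {K K' : Submodule ℝ E} (h : K = K') :
    Submodule.reflection K = Submodule.reflection K' := by
  subst h; rfl

private lemma refl_formula (α v : E) :
    Submodule.reflection (ℝ ∙ α)ᗮ v = v - ((2 : ℝ) * (⟪α, v⟫ / ‖α‖ ^ 2)) • α := by
  rw [Submodule.reflection_orthogonal_apply, Submodule.reflection_singleton_apply]
  rw [two_smul, two_mul, add_smul]
  simp only [RCLike.ofReal_real_eq_id, id_eq]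
  abel

private lemma refl_neg (γ : E) : Submodule.reflection (ℝ ∙ (-γ))ᗮ = Submodule.reflection (ℝ ∙ γ)ᗮ := by
  refine LinearIsometryEquiv.ext fun v => ?_
  rw [refl_formula, refl_formula]
  simp [inner_neg_left, neg_div, smul_neg, neg_smul]

private lemma map_orth (f : E ≃ₗᵢ[ℝ] E) (K : Submodule ℝ E) :
    Kᗮ.map (f.toLinearEquiv : E →ₗ[ℝ] E) = (K.map (f.toLinearEquiv : E →ₗ[ℝ] E))ᗮ := by
  ext x
  simp only [Submodule.mem_map, Submodule.mem_orthogonal, LinearEquiv.coe_coe,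
    LinearIsometryEquiv.coe_toLinearEquiv]
  constructor
  · rintro ⟨y, hy, rfl⟩ u ⟨v, hv, rfl⟩
    rw [f.inner_map_map]
    exact hy v hv
  · intro h
    refine ⟨f.symm x, fun u hu => ?_, f.apply_symm_apply x⟩
    have h2 := h (f u) ⟨u, hu, rfl⟩
    rw [← f.apply_symm_apply x] at h2
    rwa [f.inner_map_map] at h2

private lemma conj_reflection (α β : E) :
    Submodule.reflection (ℝ ∙ (Submodule.reflection (ℝ ∙ α)ᗮ β))ᗮ =
      Submodule.reflection (ℝ ∙ α)ᗮ * Submodule.reflection (ℝ ∙ β)ᗮ * Submodule.reflection (ℝ ∙ α)ᗮ := by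
  set s : E ≃ₗᵢ[ℝ] E := Submodule.reflection (ℝ ∙ α)ᗮ with hs
  have hmap : ((ℝ ∙ β)ᗮ).map (s.toLinearEquiv : E →ₗ[ℝ] E) = (ℝ ∙ (s β))ᗮ := by
    rw [map_orth]
    congr 1
    rw [Submodule.map_span, Set.image_singleton]
    rfl
  have h1 : Submodule.reflection (ℝ ∙ (s β))ᗮ
      = Submodule.reflection (((ℝ ∙ β)ᗮ).map (s.toLinearEquiv : E →ₗ[ℝ] E)) :=
    (reflection_congr hmap).symm
  rw [h1, Submodule.reflection_map]
  rfl

end Helpers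

open Classical in
/-- For a Coxeter root system `Φ` with positive system `Δ`, Submodule.reflection group
`G`, and a `G`-invariant even multiplicity function `k`, the elements
`t_α = k_α s_α` of the group algebra satisfy the holonomy relations of the
Submodule.reflection arrangement. -/
theorem reflections_satisfy_holonomy_relations
    {E : Type*} [NormedAddCommGroup E] [InnerProductSpace ℝ E]
    [FiniteDimensional ℝ E]
    (Φ : Finset E)
    (hne : (0 : E) ∉ Φ)
    (hspan : Submodule.span ℝ (Φ : Set E) = ⊤)
    (hneg : ∀ α ∈ Φ, -α ∈ Φ)
    (hmul : ∀ α ∈ Φ, ∀ c : ℝ, c • α ∈ Φ → c = 1 ∨ c = -1)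
    (hrefl : ∀ α ∈ Φ, ∀ β ∈ Φ, Submodule.reflection (ℝ ∙ α)ᗮ β ∈ Φ)
    (Δ : Finset E) (hΔΦ : Δ ⊆ Φ)
    (hpos : ∀ α ∈ Φ, (α ∈ Δ ∧ -α ∉ Δ) ∨ (α ∉ Δ ∧ -α ∈ Δ))
    (k : E → ℂ)
    (hkeven : ∀ α ∈ Φ, k (-α) = k α)
    (hkinv : ∀ α ∈ Φ,
      ∀ g ∈ Subgroup.closure {g : E ≃ₗᵢ[ℝ] E | ∃ β ∈ Φ, g = Submodule.reflection (ℝ ∙ β)ᗮ},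
        k (g α) = k α) :
    ∀ α ∈ Δ, ∀ P : Submodule ℝ E, Module.finrank ℝ P = 2 → α ∈ P →
      ⁅k α • MonoidAlgebra.of ℂ (E ≃ₗᵢ[ℝ] E) (Submodule.reflection (ℝ ∙ α)ᗮ),
       ∑ β ∈ Δ.filter (fun β => β ∈ P),
         k β • MonoidAlgebra.of ℂ (E ≃ₗᵢ[ℝ] E) (Submodule.reflection (ℝ ∙ β)ᗮ)⁆ = 0 := by
  intro α hα P hP2 hαP
  set s : E ≃ₗᵢ[ℝ] E := Submodule.reflection (ℝ ∙ α)ᗮ with hsdef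
  have hαΦ : α ∈ Φ := hΔΦ hα
  have hsG : s ∈ Subgroup.closure
      {g : E ≃ₗᵢ[ℝ] E | ∃ β ∈ Φ, g = Submodule.reflection (ℝ ∙ β)ᗮ} :=
    Subgroup.subset_closure ⟨α, hαΦ, rfl⟩
  have hsP : ∀ v ∈ P, s v ∈ P := by
    intro v hv
    rw [hsdef, refl_formula]
    exact P.sub_mem hv (P.smul_mem _ hαP)
  set a : MonoidAlgebra ℂ (E ≃ₗᵢ[ℝ] E) := MonoidAlgebra.of ℂ (E ≃ₗᵢ[ℝ] E) s with ha
  set t := Δ.filter (fun β => β ∈ P) with ht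
  set σ : E → E := fun β => if s β ∈ Δ then s β else -(s β) with hσ
  have key : ∀ β ∈ t, β ∈ Δ ∧ β ∈ P ∧ β ∈ Φ ∧ s β ∈ Φ ∧ s β ∈ P := by
    intro β hβ
    rw [ht, Finset.mem_filter] at hβ
    exact ⟨hβ.1, hβ.2, hΔΦ hβ.1, hrefl α hαΦ β (hΔΦ hβ.1), hsP β hβ.2⟩
  have hσt : ∀ β ∈ t, σ β ∈ t := by
    intro β hβ
    obtain ⟨h1, h2, h3, h4, h5⟩ := key β hβ
    rw [ht, Finset.mem_filter]
    by_cases hc : s β ∈ Δ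
    · simp only [hσ, if_pos hc]
      exact ⟨hc, h5⟩
    · simp only [hσ, if_neg hc]
      refine ⟨?_, P.neg_mem h5⟩
      rcases hpos (s β) h4 with ⟨h, _⟩ | ⟨_, h⟩
      · exact absurd h hc
      · exact h
  have hσσ : ∀ β ∈ t, σ (σ β) = β := by
    intro β hβ
    obtain ⟨h1, h2, h3, h4, h5⟩ := key β hβ
    by_cases hc : s β ∈ Δ
    · have hss : s (s β) = β := Submodule.reflection_reflection _ β
      simp only [hσ, if_pos hc, hss, if_pos h1]
    · have hss : s (-(s β)) = -β := by
        rw [map_neg]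
        exact congrArg Neg.neg (Submodule.reflection_reflection _ β)
      have hnβ : -β ∉ Δ := by
        rcases hpos β h3 with ⟨_, h⟩ | ⟨h, _⟩
        · exact h
        · exact absurd h1 h
      simp only [hσ, if_neg hc, hss, if_neg hnβ, neg_neg]
  have hkσ : ∀ β ∈ t, k (σ β) = k β := by
    intro β hβ
    obtain ⟨h1, h2, h3, h4, h5⟩ := key β hβ
    have hks : k (s β) = k β := hkinv β h3 s hsG
    by_cases hc : s β ∈ Δ
    · simp only [hσ, if_pos hc, hks]
    · simp only [hσ, if_neg hc]
      rw [hkeven (s β) h4, hks]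
  have hreflσ : ∀ β ∈ t, Submodule.reflection (ℝ ∙ (σ β))ᗮ = s * Submodule.reflection (ℝ ∙ β)ᗮ * s := by
    intro β hβ
    have conj := conj_reflection α β
    by_cases hc : s β ∈ Δ
    · simp only [hσ, if_pos hc]
      exact conj
    · simp only [hσ, if_neg hc]
      rw [refl_neg]
      exact conj
  have hcomm : a * (∑ β ∈ t, k β • MonoidAlgebra.of ℂ (E ≃ₗᵢ[ℝ] E) (Submodule.reflection (ℝ ∙ β)ᗮ))
      = (∑ β ∈ t, k β • MonoidAlgebra.of ℂ (E ≃ₗᵢ[ℝ] E) (Submodule.reflection (ℝ ∙ β)ᗮ)) * a := by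
    rw [Finset.mul_sum, Finset.sum_mul]
    simp only [mul_smul_comm, smul_mul_assoc, ha, ← map_mul]
    refine Finset.sum_nbij' σ σ hσt hσt hσσ hσσ ?_
    intro β hβ
    rw [hkσ β hβ, hreflσ β hβ]
    congr 2
    rw [mul_assoc, mul_assoc]
    have hss : s * s = 1 := Submodule.reflection_mul_reflection _
    rw [hss, mul_one]
  rw [Ring.lie_def, smul_mul_assoc, mul_smul_comm, hcomm, sub_self]
end

section
/- Let L be a Lie algebra over ℂ with elements t_{ij} = t_{ji}, 1 ≤ i < j ≤ n, satisfying the Kohno–Drinfeld relations: [t_{ij}, t_{kl}] = 0 for distinct i, j, k, l, and [t_{ij}, t_{ik} + t_{jk}] = 0 for distinct i, j, k. Then for any pairwise distinct complex numbers z₁, …, z_n, the Gaudin hamiltonians H_i = Σ_{j ≠ i} t_{ij}/(z_i − z_j), i = 1, …, n, pairwise commute: [H_i, H_j] = 0 for all i, j. -/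
open Finset


/-- Under the Kohno–Drinfeld relations, the Gaudin hamiltonians
`H_i = ∑_{j ≠ i} t_{ij}/(z_i − z_j)` pairwise commute, for any pairwise
distinct `z₁, …, z_n`. -/
theorem kohno_drinfeld_gaudin_commute
    {L : Type*} [LieRing L] [LieAlgebra ℂ L] {n : ℕ}
    (t : Fin n → Fin n → L)
    (hsymm : ∀ i j, t i j = t j i)
    (h4 : ∀ i j k l : Fin n, i ≠ j → i ≠ k → i ≠ l → j ≠ k → j ≠ l → k ≠ l →
      ⁅t i j, t k l⁆ = 0)
    (h3 : ∀ i j k : Fin n, i ≠ j → i ≠ k → j ≠ k →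
      ⁅t i j, t i k + t j k⁆ = 0)
    (z : Fin n → ℂ) (hz : Function.Injective z) :
    ∀ i j : Fin n,
      ⁅∑ k ∈ Finset.univ.erase i, (z i - z k)⁻¹ • t i k,
       ∑ k ∈ Finset.univ.erase j, (z j - z k)⁻¹ • t j k⁆ = 0 := by
  intro i j
  rcases eq_or_ne i j with rfl | hij
  · exact lie_self _
  have hzne : ∀ p q : Fin n, p ≠ q → z p - z q ≠ 0 := fun p q h =>
    sub_ne_zero.mpr (fun e => h (hz e))
  set F : Fin n → Fin n → L :=
    fun k l => ((z i - z k)⁻¹ * (z j - z l)⁻¹) • ⁅t i k, t j l⁆ with hF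
  have key : ⁅∑ k ∈ univ.erase i, (z i - z k)⁻¹ • t i k,
      ∑ k ∈ univ.erase j, (z j - z k)⁻¹ • t j k⁆
      = ∑ k ∈ univ.erase i, ∑ l ∈ univ.erase j, F k l := by
    have sum_lie' : ∀ (s : Finset (Fin n)) (f : Fin n → L) (y : L),
        ⁅∑ x ∈ s, f x, y⁆ = ∑ x ∈ s, ⁅f x, y⁆ := fun s f y =>
      map_sum (AddMonoidHom.mk' (fun x => ⁅x, y⁆) (fun a b => add_lie a b y)) f s
    have lie_sum' : ∀ (s : Finset (Fin n)) (f : Fin n → L) (y : L),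
        ⁅y, ∑ x ∈ s, f x⁆ = ∑ x ∈ s, ⁅y, f x⁆ := fun s f y =>
      map_sum (AddMonoidHom.mk' (fun x => ⁅y, x⁆) (fun a b => lie_add y a b)) f s
    rw [sum_lie']
    refine Finset.sum_congr rfl fun k _ => ?_
    rw [lie_sum']
    refine Finset.sum_congr rfl fun l _ => ?_
    simp [hF, smul_smul, mul_comm]
  rw [key]
  have hj : j ∈ univ.erase i := mem_erase.mpr ⟨hij.symm, mem_univ j⟩
  rw [← Finset.add_sum_erase _ _ hj]
  -- row k = j
  have hi' : i ∈ univ.erase j := mem_erase.mpr ⟨hij, mem_univ i⟩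
  have rowj : ∑ l ∈ univ.erase j, F j l = ∑ l ∈ (univ.erase j).erase i, F j l := by
    rw [← Finset.add_sum_erase _ _ hi']
    have : F j i = 0 := by
      simp [hF, hsymm j i]
    rw [this, zero_add]
  rw [rowj]
  have hset : (univ.erase j).erase i = (univ.erase i).erase j := by
    rw [Finset.erase_right_comm]
  rw [hset]
  -- rows k ∈ s
  have rowk : ∀ k ∈ (univ.erase i).erase j,
      ∑ l ∈ univ.erase j, F k l = F k i + F k k := by
    intro k hk
    obtain ⟨hkj, hki, -⟩ : k ≠ j ∧ k ≠ i ∧ True := by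
      simp only [mem_erase, mem_univ, and_true] at hk
      exact ⟨hk.1, hk.2, trivial⟩
    rw [← Finset.add_sum_erase _ _ hi']
    have hk' : k ∈ (univ.erase j).erase i := mem_erase.mpr ⟨hki, mem_erase.mpr ⟨hkj, mem_univ k⟩⟩
    rw [← Finset.add_sum_erase _ _ hk']
    have : ∑ l ∈ ((univ.erase j).erase i).erase k, F k l = 0 := by
      refine Finset.sum_eq_zero fun l hl => ?_
      simp only [mem_erase, mem_univ, and_true] at hl
      obtain ⟨hlk, hli, hlj⟩ := hl
      have : ⁅t i k, t j l⁆ = 0 :=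
        h4 i k j l hki.symm hij (Ne.symm hli) hkj (Ne.symm hlk) (Ne.symm hlj)
      simp [hF, this]
    rw [this, add_zero]
  rw [Finset.sum_congr rfl rowk, ← Finset.sum_add_distrib]
  refine Finset.sum_eq_zero fun k hk => ?_
  simp only [mem_erase, mem_univ, and_true] at hk
  obtain ⟨hkj, hki⟩ := hk
  -- bracket relations
  set X := ⁅t i j, t i k⁆ with hX
  have e1 : ⁅t i j, t j k⁆ = -X := by
    have h := h3 i j k hij hki.symm hkj.symm
    rw [lie_add] at h
    rw [eq_neg_iff_add_eq_zero, add_comm]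
    exact h
  have e2 : ⁅t i k, t i j⁆ = -X := (lie_skew _ _).symm
  have e3 : ⁅t i k, t j k⁆ = X := by
    have h := h3 i k j hki.symm hij hkj
    rw [hsymm k j, lie_add] at h
    have h' : ⁅t i k, t j k⁆ = -⁅t i k, t i j⁆ := by
      rw [eq_neg_iff_add_eq_zero, add_comm]; exact h
    rw [h', e2, neg_neg]
  have hzij := hzne i j hij
  have hzik := hzne i k (Ne.symm hki)
  have hzjk := hzne j k (Ne.symm hkj)
  have hzji := hzne j i hij.symm
  simp only [hF, hsymm j i, e1, e2, e3, smul_neg]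
  rw [← neg_smul, ← neg_smul, ← add_smul, ← add_smul]
  convert zero_smul ℂ X
  field_simp
  ring
end

section
/- Let L be a Lie algebra over ℂ with elements r_i, t_{ij} = t_{ji}, s_{ij} = s_{ji} (1 ≤ i < j ≤ n) satisfying the B_n holonomy relations. Let z₁, …, z_n be nonzero complex numbers with z_i ≠ z_j and z_i ≠ −z_j for all i ≠ j. Then the elements H(a) = Σ_i (a_i/z_i) r_i + Σ_{i<j} ((a_i − a_j)/(z_i − z_j)) t_{ij} + Σ_{i<j} ((a_i + a_j)/(z_i + z_j)) s_{ij}, a ∈ ℂⁿ, pairwise commute: [H(a), H(b)] = 0 for all a, b ∈ ℂⁿ. -/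
open Finset

private lemma bn_two_index {L : Type*} [LieRing L] [LieAlgebra ℂ L]
    (A B tt ss : L) (α β p q : ℂ)
    (h4 : α*β + α*p = p*β)
    (h5 : p*β + α*q = α*β + 2*p*q)
    (h6 : q*β + 2*p*q = p*β)
    (h1 : ⁅A, B + tt + ss⁆ = 0)
    (h2 : ⁅tt, A + B + ss⁆ = 0)
    (h3 : ⁅ss, A + B + tt⁆ = 0) :
    ⁅α • A, β • B⁆ + ⁅α • A, (-p) • tt + q • ss⁆
      + (⁅p • tt + q • ss, β • B⁆ + ⁅p • tt + q • ss, (-p) • tt + q • ss⁆) = 0 := by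
  simp only [lie_add, add_lie] at h1 h2 h3
  rw [show ⁅tt, A⁆ = -⁅A, tt⁆ by rw [← lie_skew]] at h2
  rw [show ⁅ss, A⁆ = -⁅A, ss⁆ by rw [← lie_skew]] at h3
  rw [show ⁅ss, tt⁆ = -⁅tt, ss⁆ by rw [← lie_skew]] at h3
  have hAB : ⁅A, B⁆ = -⁅A, tt⁆ - ⁅A, ss⁆ := by
    linear_combination (norm := abel) h1
  have hW : ⁅tt, ss⁆ = ⁅A, tt⁆ - ⁅tt, B⁆ := by
    linear_combination (norm := abel) h2
  have hV : ⁅ss, B⁆ = ⁅A, tt⁆ + ⁅A, ss⁆ - ⁅tt, B⁆ := by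
    linear_combination (norm := abel) h3 + hW
  have hST : ⁅ss, tt⁆ = -⁅tt, ss⁆ := by rw [← lie_skew]
  simp only [lie_add, add_lie, smul_lie, lie_smul, lie_self, smul_zero]
  rw [hAB, hST, hV, hW]
  match_scalars <;>
    first
      | linear_combination h6 - h4
      | linear_combination h5
      | linear_combination h6
      | linear_combination h5 + h6
      | linear_combination -h6
      | linear_combination -h5
      | linear_combination -h5 - h6
      | ring

private lemma bn_three_index {L : Type*} [LieRing L] [LieAlgebra ℂ L]
    (t1 t2 t3 s1 s2 s3 : L) (p1 q1 p2 q2 p3 q3 : ℂ)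
    (e1 : p1*p2 + p2*p3 = p1*p3) (e2 : p1*q2 + q2*q3 = p1*q3)
    (e3 : q1*q3 + p2*q1 = p2*q3) (e4 : q2*p3 = q1*p3 + q1*q2)
    (hT1 : ⁅t2, t1 + t3⁆ = 0) (hT2 : ⁅t3, t1 + t2⁆ = 0)
    (hU1 : ⁅t1, s2 + s3⁆ = 0) (hV1 : ⁅t2, s1 + s3⁆ = 0) (hW1 : ⁅t3, s1 + s2⁆ = 0)
    (hS1 : ⁅s1, t2 + s3⁆ = 0) (hS2 : ⁅s2, t1 + s3⁆ = 0) (hS3 : ⁅s2, t3 + s1⁆ = 0)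
    (hS4 : ⁅s3, t1 + s2⁆ = 0) :
    ⁅p1 • t1 + q1 • s1, p3 • t3 + q3 • s3⁆
      + (⁅p2 • t2 + q2 • s2, (-p1) • t1 + q1 • s1⁆
        + ⁅p2 • t2 + q2 • s2, p3 • t3 + q3 • s3⁆) = 0 := by
  simp only [lie_add] at hT1 hT2 hU1 hV1 hW1 hS1 hS2 hS3 hS4
  have rT1 : ⁅t2, t1⁆ = -⁅t2, t3⁆ := by linear_combination (norm := abel) hT1
  have k1 : ⁅t3, t2⁆ = -⁅t2, t3⁆ := by rw [← lie_skew]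
  have rT2 : ⁅t1, t3⁆ = -⁅t2, t3⁆ := by
    have k2 : ⁅t1, t3⁆ = -⁅t3, t1⁆ := by rw [← lie_skew]
    linear_combination (norm := abel) k2 - hT2 + k1
  have rU : ⁅t1, s3⁆ = -⁅t1, s2⁆ := by linear_combination (norm := abel) hU1
  have rV : ⁅t2, s3⁆ = -⁅t2, s1⁆ := by linear_combination (norm := abel) hV1
  have rW : ⁅t3, s2⁆ = -⁅t3, s1⁆ := by linear_combination (norm := abel) hW1
  have rS1 : ⁅s1, s3⁆ = ⁅t2, s1⁆ := by
    have k2 : ⁅s1, t2⁆ = -⁅t2, s1⁆ := by rw [← lie_skew]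
    linear_combination (norm := abel) hS1 - k2
  have rS2 : ⁅s2, s3⁆ = ⁅t1, s2⁆ := by
    have k2 : ⁅s2, s3⁆ = -⁅s3, s2⁆ := by rw [← lie_skew]
    have k3 : ⁅s3, t1⁆ = -⁅t1, s3⁆ := by rw [← lie_skew]
    linear_combination (norm := abel) k2 - hS4 + k3 - rU
  have rS3 : ⁅s2, t1⁆ = -⁅t1, s2⁆ := by
    linear_combination (norm := abel) hS2 - rS2
  have rS4 : ⁅s2, s1⁆ = -⁅t3, s1⁆ := by
    have k2 : ⁅s2, t3⁆ = -⁅t3, s2⁆ := by rw [← lie_skew]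
    linear_combination (norm := abel) hS3 - k2 + rW
  have rS5 : ⁅s1, t3⁆ = -⁅t3, s1⁆ := by rw [← lie_skew]
  have rS6 : ⁅s2, t3⁆ = ⁅t3, s1⁆ := by
    have k2 : ⁅s2, t3⁆ = -⁅t3, s2⁆ := by rw [← lie_skew]
    linear_combination (norm := abel) k2 - rW
  simp only [lie_add, add_lie, smul_lie, lie_smul]
  rw [rT2, rS5, rU, rS1, rT1, rS3, rS4, rS6, rV, rS2]
  match_scalars <;>
    first
      | linear_combination e1 | linear_combination -e1
      | linear_combination e2 | linear_combination -e2
      | linear_combination e3 | linear_combination -e3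
      | linear_combination e4 | linear_combination -e4
      | ring

private lemma bn_pair_sum {M : Type*} [AddCommMonoid M] {n : ℕ} (g : Fin n → Fin n → M) :
    (∑ i, ∑ j ∈ Finset.univ.filter (fun j => i < j), (g i j + g j i))
      = ∑ i, ∑ j ∈ Finset.univ \ {i}, g i j := by
  have hswap : (∑ i : Fin n, ∑ j ∈ Finset.univ.filter (fun j => i < j), g j i)
      = ∑ i : Fin n, ∑ j ∈ Finset.univ.filter (fun j => j < i), g i j := by
    refine Finset.sum_comm' ?_
    intro x y
    simp [and_comm]
  have hsplit : ∀ i : Fin n,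
      (Finset.univ \ {i} : Finset (Fin n))
        = Finset.univ.filter (fun j => i < j) ∪ Finset.univ.filter (fun j => j < i) := by
    intro i
    ext j
    simp only [Finset.mem_sdiff, Finset.mem_univ, Finset.mem_singleton, true_and,
      Finset.mem_union, Finset.mem_filter, Fin.lt_def, Fin.ext_iff]
    omega
  have hdisj : ∀ i : Fin n,
      Disjoint (Finset.univ.filter (fun j => i < j)) (Finset.univ.filter (fun j => j < i)) := by
    intro i
    rw [Finset.disjoint_left]
    intro j hj hj'
    simp only [Finset.mem_filter] at hj hj'
    exact absurd (hj.2.trans hj'.2) (lt_irrefl i)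
  calc (∑ i, ∑ j ∈ Finset.univ.filter (fun j => i < j), (g i j + g j i))
      = (∑ i, ∑ j ∈ Finset.univ.filter (fun j => i < j), g i j)
        + (∑ i : Fin n, ∑ j ∈ Finset.univ.filter (fun j => i < j), g j i) := by
        rw [← Finset.sum_add_distrib]
        exact Finset.sum_congr rfl fun i _ => Finset.sum_add_distrib
    _ = ∑ i, ((∑ j ∈ Finset.univ.filter (fun j => i < j), g i j)
        + ∑ j ∈ Finset.univ.filter (fun j => j < i), g i j) := by
        rw [hswap, ← Finset.sum_add_distrib]
    _ = ∑ i, ∑ j ∈ Finset.univ \ {i}, g i j := by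
        refine Finset.sum_congr rfl fun i _ => ?_
        rw [hsplit i, Finset.sum_union (hdisj i)]

private lemma bn_H_eq {L : Type*} [LieRing L] [LieAlgebra ℂ L] {n : ℕ}
    (r : Fin n → L) (t s : Fin n → Fin n → L)
    (htsymm : ∀ i j, t i j = t j i) (hssymm : ∀ i j, s i j = s j i)
    (z : Fin n → ℂ)
    (hsub : ∀ i j : Fin n, i ≠ j → z i - z j ≠ 0)
    (hadd : ∀ i j : Fin n, i ≠ j → z i + z j ≠ 0)
    (c : Fin n → ℂ) :
    (∑ i, (c i / z i) • r i) +
       (∑ i, ∑ j ∈ Finset.univ.filter (fun j => i < j),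
         ((c i - c j) / (z i - z j)) • t i j) +
       (∑ i, ∑ j ∈ Finset.univ.filter (fun j => i < j),
         ((c i + c j) / (z i + z j)) • s i j)
    = ∑ i, c i • ((z i)⁻¹ • r i
        + ∑ m ∈ Finset.univ \ {i}, ((z i - z m)⁻¹ • t i m + (z i + z m)⁻¹ • s i m)) := by
  have ht : (∑ i, ∑ j ∈ Finset.univ.filter (fun j => i < j),
      ((c i - c j) / (z i - z j)) • t i j)
      = ∑ i, ∑ j ∈ Finset.univ \ {i}, (c i * (z i - z j)⁻¹) • t i j := by
    rw [← bn_pair_sum (fun i j => (c i * (z i - z j)⁻¹) • t i j)]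
    refine Finset.sum_congr rfl fun i _ => Finset.sum_congr rfl fun j hj => ?_
    simp only [Finset.mem_filter] at hj
    have hij : i ≠ j := ne_of_lt hj.2
    have h1 := hsub i j hij
    have h2 := hsub j i hij.symm
    rw [htsymm j i, ← add_smul]
    congr 1
    field_simp
    ring
  have hs : (∑ i, ∑ j ∈ Finset.univ.filter (fun j => i < j),
      ((c i + c j) / (z i + z j)) • s i j)
      = ∑ i, ∑ j ∈ Finset.univ \ {i}, (c i * (z i + z j)⁻¹) • s i j := by
    rw [← bn_pair_sum (fun i j => (c i * (z i + z j)⁻¹) • s i j)]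
    refine Finset.sum_congr rfl fun i _ => Finset.sum_congr rfl fun j hj => ?_
    simp only [Finset.mem_filter] at hj
    have hij : i ≠ j := ne_of_lt hj.2
    have h1 := hadd i j hij
    have h2 := hadd j i hij.symm
    rw [hssymm j i, ← add_smul]
    congr 1
    field_simp
    ring
  rw [ht, hs]
  simp only [smul_add, Finset.smul_sum, smul_smul, Finset.sum_add_distrib, div_eq_mul_inv]
  abel

set_option maxHeartbeats 1000000 in
private lemma bn_K_commute {L : Type*} [LieRing L] [LieAlgebra ℂ L] {n : ℕ}
    (r : Fin n → L) (t s : Fin n → Fin n → L)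
    (htsymm : ∀ i j, t i j = t j i) (hssymm : ∀ i j, s i j = s j i)
    (hB2 : ∀ i j : Fin n, i ≠ j →
      ⁅r i, r j + t i j + s i j⁆ = 0 ∧
      ⁅t i j, r i + r j + s i j⁆ = 0 ∧
      ⁅s i j, r i + r j + t i j⁆ = 0)
    (hA2 : ∀ i j k : Fin n, i ≠ j → i ≠ k → j ≠ k →
      ⁅t i j, t i k + t j k⁆ = 0 ∧
      ⁅t i j, s i k + s j k⁆ = 0 ∧
      ⁅s i j, t i k + s j k⁆ = 0)
    (hA1r : ∀ i j k : Fin n, i ≠ j → i ≠ k → j ≠ k →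
      ⁅r i, t j k⁆ = 0 ∧ ⁅r i, s j k⁆ = 0)
    (hA1 : ∀ i j k l : Fin n, i ≠ j → i ≠ k → i ≠ l → j ≠ k → j ≠ l → k ≠ l →
      ⁅t i j, t k l⁆ = 0 ∧ ⁅t i j, s k l⁆ = 0 ∧ ⁅s i j, s k l⁆ = 0)
    (z : Fin n → ℂ) (hz0 : ∀ i, z i ≠ 0)
    (hsub : ∀ i j : Fin n, i ≠ j → z i - z j ≠ 0)
    (hadd : ∀ i j : Fin n, i ≠ j → z i + z j ≠ 0)
    (F : Fin n → Fin n → L)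
    (hFdef : ∀ i m, F i m = (z i - z m)⁻¹ • t i m + (z i + z m)⁻¹ • s i m)
    (k l : Fin n) (hkl : k ≠ l) :
    ⁅(z k)⁻¹ • r k + ∑ m ∈ Finset.univ \ {k}, F k m,
     (z l)⁻¹ • r l + ∑ m ∈ Finset.univ \ {l}, F l m⁆ = 0 := by
  classical
  have lie_sum : ∀ (x : L) (f : Fin n → L) (S : Finset (Fin n)),
      ⁅x, ∑ m ∈ S, f m⁆ = ∑ m ∈ S, ⁅x, f m⁆ := fun x f S =>
    map_sum (AddMonoidHom.mk' (fun y => ⁅x, y⁆) (lie_add x)) f S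
  have sum_lie : ∀ (x : L) (f : Fin n → L) (S : Finset (Fin n)),
      ⁅∑ m ∈ S, f m, x⁆ = ∑ m ∈ S, ⁅f m, x⁆ := fun x f S =>
    map_sum (AddMonoidHom.mk' (fun y => ⁅y, x⁆) (fun a b => add_lie a b x)) f S
  have hlk : l ≠ k := hkl.symm
  have hkmem : k ∈ Finset.univ \ {l} := by simp [hkl]
  have hlmem : l ∈ Finset.univ \ {k} := by simp [hlk]
  have hFF0 : ∀ i j i' j' : Fin n, i ≠ j → i ≠ i' → i ≠ j' → j ≠ i' → j ≠ j' → i' ≠ j' →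
      ⁅F i j, F i' j'⁆ = 0 := by
    intro i j i' j' h1 h2 h3 h4 h5 h6
    have ht1 := (hA1 i j i' j' h1 h2 h3 h4 h5 h6).1
    have ht2 := (hA1 i j i' j' h1 h2 h3 h4 h5 h6).2.1
    have ht3 := (hA1 i j i' j' h1 h2 h3 h4 h5 h6).2.2
    have ht4 : ⁅s i j, t i' j'⁆ = 0 := by
      rw [← lie_skew, (hA1 i' j' i j h6 h2.symm h4.symm h3.symm h5.symm h1).2.1, neg_zero]
    rw [hFdef i j, hFdef i' j']
    simp only [lie_add, add_lie, lie_smul, smul_lie, ht1, ht2, ht3, ht4, smul_zero, add_zero]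
  have hrF0 : ∀ i i' j' : Fin n, i ≠ i' → i ≠ j' → i' ≠ j' →
      ⁅r i, F i' j'⁆ = 0 := by
    intro i i' j' h1 h2 h3
    rw [hFdef]
    simp only [lie_add, lie_smul, (hA1r i i' j' h1 h2 h3).1, (hA1r i i' j' h1 h2 h3).2,
      smul_zero, add_zero]
  rw [add_lie, lie_add, lie_add]
  have hT2 : ⁅(z k)⁻¹ • r k, ∑ m ∈ Finset.univ \ {l}, F l m⁆ = ⁅(z k)⁻¹ • r k, F l k⁆ := by
    rw [lie_sum _ (F l)]
    refine Finset.sum_eq_single_of_mem k hkmem fun m hm hmk => ?_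
    have hml : m ≠ l := by simpa using hm
    rw [smul_lie, hrF0 k l m hkl (Ne.symm hmk) (Ne.symm hml), smul_zero]
  have hT3 : ⁅∑ m ∈ Finset.univ \ {k}, F k m, (z l)⁻¹ • r l⁆ = ⁅F k l, (z l)⁻¹ • r l⁆ := by
    rw [sum_lie _ (F k)]
    refine Finset.sum_eq_single_of_mem l hlmem fun m hm hml => ?_
    have hmk : m ≠ k := by simpa using hm
    have h0 : ⁅F k m, r l⁆ = 0 := by
      rw [← lie_skew, hrF0 l k m hlk (Ne.symm hml) (Ne.symm hmk), neg_zero]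
    rw [lie_smul, h0, smul_zero]
  have hT4 : ⁅∑ m ∈ Finset.univ \ {k}, F k m, ∑ m ∈ Finset.univ \ {l}, F l m⁆
      = ⁅F k l, F l k⁆
        + ((∑ m ∈ (Finset.univ \ {l}).erase k, ⁅F k l, F l m⁆)
          + ∑ m ∈ (Finset.univ \ {k}).erase l, (⁅F k m, F l k⁆ + ⁅F k m, F l m⁆)) := by
    rw [sum_lie _ (F k), ← Finset.add_sum_erase _ _ hlmem]
    have hA : ⁅F k l, ∑ m ∈ Finset.univ \ {l}, F l m⁆
        = ⁅F k l, F l k⁆ + ∑ m ∈ (Finset.univ \ {l}).erase k, ⁅F k l, F l m⁆ := by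
      rw [lie_sum (F k l) (F l), ← Finset.add_sum_erase _ _ hkmem]
    have hB : ∀ m ∈ (Finset.univ \ {k}).erase l,
        ⁅F k m, ∑ m' ∈ Finset.univ \ {l}, F l m'⁆ = ⁅F k m, F l k⁆ + ⁅F k m, F l m⁆ := by
      intro m hm
      have hml : m ≠ l := (Finset.mem_erase.mp hm).1
      have hmk : m ≠ k := by simpa using (Finset.mem_erase.mp hm).2
      rw [lie_sum (F k m) (F l), ← Finset.add_sum_erase _ _ hkmem]
      have hmmem : m ∈ (Finset.univ \ {l}).erase k := by simp [hmk, hml]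
      rw [← Finset.add_sum_erase _ _ hmmem]
      have hrest : ∑ m' ∈ ((Finset.univ \ {l}).erase k).erase m, ⁅F k m, F l m'⁆ = 0 := by
        refine Finset.sum_eq_zero fun m' hm' => ?_
        have h1 : m' ≠ m := (Finset.mem_erase.mp hm').1
        have h2 : m' ≠ k := (Finset.mem_erase.mp (Finset.mem_erase.mp hm').2).1
        have h3 : m' ≠ l := by
          simpa using (Finset.mem_erase.mp (Finset.mem_erase.mp hm').2).2
        exact hFF0 k m l m' hmk.symm hkl (Ne.symm h2) hml (Ne.symm h1) (Ne.symm h3)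
      rw [hrest, add_zero]
    rw [hA, Finset.sum_congr rfl hB, add_assoc]
  rw [hT2, hT3, hT4]
  -- scalar nonvanishing
  have nk := hz0 k
  have nl := hz0 l
  have nkl := hsub k l hkl
  have nkl' := hadd k l hkl
  -- two-index part
  have hFkl : F k l = (z k - z l)⁻¹ • t k l + (z k + z l)⁻¹ • s k l := hFdef k l
  have hFlk : F l k = (-(z k - z l)⁻¹) • t k l + (z k + z l)⁻¹ • s k l := by
    rw [hFdef, htsymm l k, hssymm l k, show z l - z k = -(z k - z l) by ring,
      show z l + z k = z k + z l by ring, inv_neg]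
  have hP : ⁅(z k)⁻¹ • r k, (z l)⁻¹ • r l⁆ + ⁅(z k)⁻¹ • r k, F l k⁆
      + (⁅F k l, (z l)⁻¹ • r l⁆ + ⁅F k l, F l k⁆) = 0 := by
    have h4 : (z k)⁻¹ * (z l)⁻¹ + (z k)⁻¹ * (z k - z l)⁻¹ = (z k - z l)⁻¹ * (z l)⁻¹ := by
      field_simp
      ring
    have h5 : (z k - z l)⁻¹ * (z l)⁻¹ + (z k)⁻¹ * (z k + z l)⁻¹
        = (z k)⁻¹ * (z l)⁻¹ + 2 * (z k - z l)⁻¹ * (z k + z l)⁻¹ := by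
      field_simp
      ring
    have h6 : (z k + z l)⁻¹ * (z l)⁻¹ + 2 * (z k - z l)⁻¹ * (z k + z l)⁻¹
        = (z k - z l)⁻¹ * (z l)⁻¹ := by
      field_simp
      ring
    rw [hFkl, hFlk]
    exact bn_two_index (r k) (r l) (t k l) (s k l)
      (z k)⁻¹ (z l)⁻¹ (z k - z l)⁻¹ (z k + z l)⁻¹ h4 h5 h6
      (hB2 k l hkl).1 (hB2 k l hkl).2.1 (hB2 k l hkl).2.2
  -- three-index part
  have hsets : (Finset.univ \ {l}).erase k = (Finset.univ \ {k}).erase l := by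
    ext x
    simp only [Finset.mem_erase, Finset.mem_sdiff, Finset.mem_univ, Finset.mem_singleton,
      true_and]
    tauto
  have hQ : ∀ m ∈ (Finset.univ \ {k}).erase l,
      ⁅F k l, F l m⁆ + (⁅F k m, F l k⁆ + ⁅F k m, F l m⁆) = 0 := by
    intro m hm
    have hml : m ≠ l := (Finset.mem_erase.mp hm).1
    have hmk : m ≠ k := by simpa using (Finset.mem_erase.mp hm).2
    have hkm : k ≠ m := hmk.symm
    have hlm : l ≠ m := hml.symm
    have nkm := hsub k m hkm
    have nlm := hsub l m hlm
    have nkm' := hadd k m hkm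
    have nlm' := hadd l m hlm
    have e1 : (z k - z l)⁻¹ * (z k - z m)⁻¹ + (z k - z m)⁻¹ * (z l - z m)⁻¹
        = (z k - z l)⁻¹ * (z l - z m)⁻¹ := by field_simp; ring
    have e2 : (z k - z l)⁻¹ * (z k + z m)⁻¹ + (z k + z m)⁻¹ * (z l + z m)⁻¹
        = (z k - z l)⁻¹ * (z l + z m)⁻¹ := by field_simp; ring
    have e3 : (z k + z l)⁻¹ * (z l + z m)⁻¹ + (z k - z m)⁻¹ * (z k + z l)⁻¹
        = (z k - z m)⁻¹ * (z l + z m)⁻¹ := by field_simp; ring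
    have e4 : (z k + z m)⁻¹ * (z l - z m)⁻¹
        = (z k + z l)⁻¹ * (z l - z m)⁻¹ + (z k + z l)⁻¹ * (z k + z m)⁻¹ := by
      field_simp; ring
    have hT1' : ⁅t k m, t k l + t l m⁆ = 0 := by
      have h := (hA2 k m l hkm hkl hml).1
      rwa [htsymm m l] at h
    have hT2' : ⁅t l m, t k l + t k m⁆ = 0 := by
      have h := (hA2 l m k hlm hlk hmk).1
      rwa [htsymm l k, htsymm m k] at h
    have hU1' : ⁅t k l, s k m + s l m⁆ = 0 := (hA2 k l m hkl hkm hlm).2.1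
    have hV1' : ⁅t k m, s k l + s l m⁆ = 0 := by
      have h := (hA2 k m l hkm hkl hml).2.1
      rwa [hssymm m l] at h
    have hW1' : ⁅t l m, s k l + s k m⁆ = 0 := by
      have h := (hA2 l m k hlm hlk hmk).2.1
      rwa [hssymm l k, hssymm m k] at h
    have hS1' : ⁅s k l, t k m + s l m⁆ = 0 := (hA2 k l m hkl hkm hlm).2.2
    have hS2' : ⁅s k m, t k l + s l m⁆ = 0 := by
      have h := (hA2 k m l hkm hkl hml).2.2
      rwa [hssymm m l] at h
    have hS3' : ⁅s k m, t l m + s k l⁆ = 0 := by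
      have h := (hA2 m k l hmk hml hkl).2.2
      rwa [hssymm m k, htsymm m l] at h
    have hS4' : ⁅s l m, t k l + s k m⁆ = 0 := by
      have h := (hA2 l m k hlm hlk hmk).2.2
      rwa [htsymm l k, hssymm m k] at h
    have h3i := bn_three_index (t k l) (t k m) (t l m) (s k l) (s k m) (s l m)
      (z k - z l)⁻¹ (z k + z l)⁻¹ (z k - z m)⁻¹ (z k + z m)⁻¹ (z l - z m)⁻¹ (z l + z m)⁻¹
      e1 e2 e3 e4 hT1' hT2' hU1' hV1' hW1' hS1' hS2' hS3' hS4'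
    rw [hFdef k l, hFdef l m, hFdef k m, hFlk]
    exact h3i
  have hQ0 : (∑ m ∈ (Finset.univ \ {l}).erase k, ⁅F k l, F l m⁆)
      + ∑ m ∈ (Finset.univ \ {k}).erase l, (⁅F k m, F l k⁆ + ⁅F k m, F l m⁆) = 0 := by
    rw [hsets, ← Finset.sum_add_distrib]
    exact Finset.sum_eq_zero hQ
  linear_combination (norm := abel) hP + hQ0

/-- Under the `B_n` holonomy relations, the Gaudin hamiltonians
`H(a) = ∑ (a_i/z_i) r_i + ∑_{i<j} ((a_i−a_j)/(z_i−z_j)) t_{ij}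
      + ∑_{i<j} ((a_i+a_j)/(z_i+z_j)) s_{ij}` pairwise commute. -/
theorem bn_gaudin_commute
    {L : Type*} [LieRing L] [LieAlgebra ℂ L] {n : ℕ}
    (r : Fin n → L) (t s : Fin n → Fin n → L)
    (htsymm : ∀ i j, t i j = t j i) (hssymm : ∀ i j, s i j = s j i)
    (hB2 : ∀ i j : Fin n, i ≠ j →
      ⁅r i, r j + t i j + s i j⁆ = 0 ∧
      ⁅t i j, r i + r j + s i j⁆ = 0 ∧
      ⁅s i j, r i + r j + t i j⁆ = 0)
    (hA2 : ∀ i j k : Fin n, i ≠ j → i ≠ k → j ≠ k →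
      ⁅t i j, t i k + t j k⁆ = 0 ∧
      ⁅t i j, s i k + s j k⁆ = 0 ∧
      ⁅s i j, t i k + s j k⁆ = 0)
    (hA1r : ∀ i j k : Fin n, i ≠ j → i ≠ k → j ≠ k →
      ⁅r i, t j k⁆ = 0 ∧ ⁅r i, s j k⁆ = 0)
    (hA1 : ∀ i j k l : Fin n, i ≠ j → i ≠ k → i ≠ l → j ≠ k → j ≠ l → k ≠ l →
      ⁅t i j, t k l⁆ = 0 ∧ ⁅t i j, s k l⁆ = 0 ∧ ⁅s i j, s k l⁆ = 0)
    (z : Fin n → ℂ) (hz0 : ∀ i, z i ≠ 0)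
    (hz : ∀ i j : Fin n, i ≠ j → z i ≠ z j ∧ z i ≠ -z j)
    (a b : Fin n → ℂ) :
    ⁅(∑ i, (a i / z i) • r i) +
       (∑ i, ∑ j ∈ Finset.univ.filter (fun j => i < j),
         ((a i - a j) / (z i - z j)) • t i j) +
       (∑ i, ∑ j ∈ Finset.univ.filter (fun j => i < j),
         ((a i + a j) / (z i + z j)) • s i j),
     (∑ i, (b i / z i) • r i) +
       (∑ i, ∑ j ∈ Finset.univ.filter (fun j => i < j),
         ((b i - b j) / (z i - z j)) • t i j) +
       (∑ i, ∑ j ∈ Finset.univ.filter (fun j => i < j),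
         ((b i + b j) / (z i + z j)) • s i j)⁆ = 0 := by
  classical
  have hsub : ∀ i j : Fin n, i ≠ j → z i - z j ≠ 0 := fun i j h =>
    sub_ne_zero.mpr (hz i j h).1
  have hadd : ∀ i j : Fin n, i ≠ j → z i + z j ≠ 0 := by
    intro i j h hc
    exact (hz i j h).2 (eq_neg_of_add_eq_zero_left hc)
  have lie_sum : ∀ (x : L) (f : Fin n → L) (S : Finset (Fin n)),
      ⁅x, ∑ m ∈ S, f m⁆ = ∑ m ∈ S, ⁅x, f m⁆ := fun x f S =>
    map_sum (AddMonoidHom.mk' (fun y => ⁅x, y⁆) (lie_add x)) f S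
  have sum_lie : ∀ (x : L) (f : Fin n → L) (S : Finset (Fin n)),
      ⁅∑ m ∈ S, f m, x⁆ = ∑ m ∈ S, ⁅f m, x⁆ := fun x f S =>
    map_sum (AddMonoidHom.mk' (fun y => ⁅y, x⁆) (fun a' b' => add_lie a' b' x)) f S
  have hKK : ∀ i j : Fin n, i ≠ j →
      ⁅(z i)⁻¹ • r i + ∑ m ∈ Finset.univ \ {i},
          ((z i - z m)⁻¹ • t i m + (z i + z m)⁻¹ • s i m),
        (z j)⁻¹ • r j + ∑ m ∈ Finset.univ \ {j},
          ((z j - z m)⁻¹ • t j m + (z j + z m)⁻¹ • s j m)⁆ = 0 := fun i j hij =>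
    bn_K_commute r t s htsymm hssymm hB2 hA2 hA1r hA1 z hz0 hsub hadd
      (fun p m => (z p - z m)⁻¹ • t p m + (z p + z m)⁻¹ • s p m) (fun _ _ => rfl) i j hij
  rw [bn_H_eq r t s htsymm hssymm z hsub hadd a, bn_H_eq r t s htsymm hssymm z hsub hadd b]
  rw [sum_lie _ _ Finset.univ]
  refine Finset.sum_eq_zero fun i _ => ?_
  rw [lie_sum _ _ Finset.univ]
  refine Finset.sum_eq_zero fun j _ => ?_
  rw [smul_lie, lie_smul]
  rcases eq_or_ne i j with rfl | hij
  · rw [lie_self, smul_zero, smul_zero]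
  · rw [hKK i j hij, smul_zero, smul_zero]
end

section
/- Let L be a Lie algebra over ℂ with elements r_i, t_{ij} = t_{ji}, s_{ij} = s_{ji} (1 ≤ i < j ≤ n) satisfying the B_n holonomy relations. Let z₁, …, z_n be pairwise distinct nonzero complex numbers. Then the elements H^A(a) = Σ_i (a_i/z_i) r_i + Σ_{i<j} ((a_i − a_j)/(z_i − z_j)) (t_{ij} + s_{ij}), a ∈ ℂⁿ, pairwise commute: [H^A(a), H^A(b)] = 0 for all a, b ∈ ℂⁿ. -/
section Aux

variable {L : Type*} [LieRing L] [LieAlgebra ℂ L]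

omit [LieAlgebra ℂ L] in
private lemma my_lie_sum {ι : Type*} (x : L) (f : ι → L) (S : Finset ι) :
    ⁅x, ∑ i ∈ S, f i⁆ = ∑ i ∈ S, ⁅x, f i⁆ := by
  classical
  induction S using Finset.induction_on with
  | empty => simp
  | insert _ _ h ih => rw [Finset.sum_insert h, Finset.sum_insert h, lie_add, ih]

omit [LieAlgebra ℂ L] in
private lemma my_sum_lie {ι : Type*} (x : L) (f : ι → L) (S : Finset ι) :
    ⁅∑ i ∈ S, f i, x⁆ = ∑ i ∈ S, ⁅f i, x⁆ := by
  classical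
  induction S using Finset.induction_on with
  | empty => simp
  | insert _ _ h ih => rw [Finset.sum_insert h, Finset.sum_insert h, add_lie, ih]

end Aux

/-- Under the `B_n` holonomy relations, the elements
`H^A(a) = ∑ (a_i/z_i) r_i + ∑_{i<j} ((a_i−a_j)/(z_i−z_j)) (t_{ij}+s_{ij})`
pairwise commute, for pairwise distinct nonzero `z₁, …, z_n`. -/
theorem bn_second_family_commute
    {L : Type*} [LieRing L] [LieAlgebra ℂ L] {n : ℕ}
    (r : Fin n → L) (t s : Fin n → Fin n → L)
    (htsymm : ∀ i j, t i j = t j i) (hssymm : ∀ i j, s i j = s j i)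
    (hB2 : ∀ i j : Fin n, i ≠ j →
      ⁅r i, r j + t i j + s i j⁆ = 0 ∧
      ⁅t i j, r i + r j + s i j⁆ = 0 ∧
      ⁅s i j, r i + r j + t i j⁆ = 0)
    (hA2 : ∀ i j k : Fin n, i ≠ j → i ≠ k → j ≠ k →
      ⁅t i j, t i k + t j k⁆ = 0 ∧
      ⁅t i j, s i k + s j k⁆ = 0 ∧
      ⁅s i j, t i k + s j k⁆ = 0)
    (hA1r : ∀ i j k : Fin n, i ≠ j → i ≠ k → j ≠ k →
      ⁅r i, t j k⁆ = 0 ∧ ⁅r i, s j k⁆ = 0)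
    (hA1 : ∀ i j k l : Fin n, i ≠ j → i ≠ k → i ≠ l → j ≠ k → j ≠ l → k ≠ l →
      ⁅t i j, t k l⁆ = 0 ∧ ⁅t i j, s k l⁆ = 0 ∧ ⁅s i j, s k l⁆ = 0)
    (z : Fin n → ℂ) (hz0 : ∀ i, z i ≠ 0)
    (hz : ∀ i j : Fin n, i ≠ j → z i ≠ z j)
    (a b : Fin n → ℂ) :
    ⁅(∑ i, (a i / z i) • r i) +
       (∑ i, ∑ j ∈ Finset.univ.filter (fun j => i < j),
         ((a i - a j) / (z i - z j)) • (t i j + s i j)),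
     (∑ i, (b i / z i) • r i) +
       (∑ i, ∑ j ∈ Finset.univ.filter (fun j => i < j),
         ((b i - b j) / (z i - z j)) • (t i j + s i j))⁆ = 0 := by
  classical
  set u : Fin n → Fin n → L := fun p q => t p q + s p q with hu
  have husymm : ∀ p q, u p q = u q p := fun p q => by
    simp only [hu, htsymm p q, hssymm p q]
  -- derived relations
  have hru : ∀ p q, p ≠ q → ⁅r p, u p q⁆ = -⁅r p, r q⁆ := by
    intro p q h
    have h2 := (hB2 p q h).1
    rw [add_assoc, lie_add] at h2
    exact eq_neg_of_add_eq_zero_right h2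
  have hurr : ∀ p q, p ≠ q → ⁅u p q, r p + r q⁆ = 0 := by
    intro p q h
    have e1 := (hB2 p q h).2.1
    have e2 := (hB2 p q h).2.2
    have hskew : ⁅t p q, s p q⁆ + ⁅s p q, t p q⁆ = 0 := by
      rw [← lie_skew]; exact neg_add_cancel _
    calc ⁅u p q, r p + r q⁆
        = (⁅t p q, r p + r q + s p q⁆ + ⁅s p q, r p + r q + t p q⁆)
            - (⁅t p q, s p q⁆ + ⁅s p q, t p q⁆) := by
          simp only [hu, lie_add, add_lie]; abel
      _ = 0 := by rw [e1, e2, hskew]; simp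
  have hur : ∀ p q, p ≠ q → ⁅u p q, r q⁆ = -⁅r p, r q⁆ := by
    intro p q h
    have h2 := hurr p q h
    rw [lie_add] at h2
    have h3 : ⁅u p q, r q⁆ = -⁅u p q, r p⁆ := eq_neg_of_add_eq_zero_right h2
    rw [h3, ← lie_skew, neg_neg, hru p q h]
  have hru0 : ∀ p m w : Fin n, p ≠ m → p ≠ w → m ≠ w → ⁅r p, u m w⁆ = 0 := by
    intro p m w h1 h2 h3
    have := hA1r p m w h1 h2 h3
    simp only [hu, lie_add, this.1, this.2, add_zero]
  have huu3 : ∀ p q m : Fin n, p ≠ q → p ≠ m → q ≠ m →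
      ⁅u p q, u p m + u q m⁆ = 0 := by
    intro p q m h1 h2 h3
    obtain ⟨A1, A2, A3⟩ := hA2 p q m h1 h2 h3
    have A4 := (hA2 q p m h1.symm h3 h2).2.2
    rw [hssymm q p] at A4
    calc ⁅u p q, u p m + u q m⁆
        = ⁅t p q, t p m + t q m⁆ + ⁅t p q, s p m + s q m⁆
            + ⁅s p q, t p m + s q m⁆ + ⁅s p q, t q m + s p m⁆ := by
          simp only [hu, lie_add, add_lie]; abel
      _ = 0 := by rw [A1, A2, A3, A4]; simp
  have huu0 : ∀ p q m w : Fin n, p ≠ q → p ≠ m → p ≠ w → q ≠ m → q ≠ w → m ≠ w →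
      ⁅u p q, u m w⁆ = 0 := by
    intro p q m w h1 h2 h3 h4 h5 h6
    obtain ⟨B1, B2, B3⟩ := hA1 p q m w h1 h2 h3 h4 h5 h6
    have B4 : ⁅s p q, t m w⁆ = 0 := by
      rw [← lie_skew, (hA1 m w p q h6 h2.symm h4.symm h3.symm h5.symm h1).2.1, neg_zero]
    simp only [hu, lie_add, add_lie, B1, B2, B3, B4]; simp
  -- the commuting elements K i
  set K : Fin n → L := fun i =>
    (z i)⁻¹ • r i + ∑ j ∈ Finset.univ.filter (fun j => j ≠ i), (z i - z j)⁻¹ • u i j with hK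
  -- key: brackets of K's vanish
  have key : ∀ i k : Fin n, ⁅K i, K k⁆ = 0 := by
    intro i k
    rcases eq_or_ne i k with rfl | hik
    · exact lie_self _
    set S : Finset (Fin n) := Finset.univ.filter (fun j => j ≠ i ∧ j ≠ k) with hS
    have hiS : i ∉ S := by simp [hS]
    have hkS : k ∉ S := by simp [hS]
    have hmem : ∀ {l}, l ∈ S → l ≠ i ∧ l ≠ k := by
      intro l hl; simpa [hS] using hl
    have e1 : Finset.univ.filter (fun j => j ≠ i) = insert k S := by
      ext x
      simp only [Finset.mem_filter, Finset.mem_univ, true_and, Finset.mem_insert, hS]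
      constructor
      · intro hx
        rcases eq_or_ne x k with rfl | hxk
        · exact Or.inl rfl
        · exact Or.inr ⟨hx, hxk⟩
      · rintro (rfl | ⟨h1, h2⟩)
        · exact hik.symm
        · exact h1
    have e2 : Finset.univ.filter (fun j => j ≠ k) = insert i S := by
      ext x
      simp only [Finset.mem_filter, Finset.mem_univ, true_and, Finset.mem_insert, hS]
      constructor
      · intro hx
        rcases eq_or_ne x i with rfl | hxi
        · exact Or.inl rfl
        · exact Or.inr ⟨hxi, hx⟩
      · rintro (rfl | ⟨h1, h2⟩)
        · exact hik
        · exact h2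
    -- nonzero denominators
    have hzik : z i - z k ≠ 0 := sub_ne_zero.mpr (hz i k hik)
    have hzki : z k - z i ≠ 0 := sub_ne_zero.mpr (hz k i hik.symm)
    -- split the K's
    set A := (z i)⁻¹ • r i with hA
    set B := (z i - z k)⁻¹ • u i k with hB
    set P := ∑ j ∈ S, (z i - z j)⁻¹ • u i j with hP
    set C := (z k)⁻¹ • r k with hC
    set D := (z k - z i)⁻¹ • u k i with hD
    set Q := ∑ j ∈ S, (z k - z j)⁻¹ • u k j with hQ
    have hKi : K i = A + (B + P) := by
      simp only [hK]
      rw [e1, Finset.sum_insert hkS]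
    have hKk : K k = C + (D + Q) := by
      simp only [hK]
      rw [e2, Finset.sum_insert hiS]
    have hexp : ⁅K i, K k⁆ =
        (⁅A, C⁆ + ⁅A, D⁆ + ⁅B, C⁆) + (⁅B, Q⁆ + ⁅P, D⁆ + ⁅P, Q⁆)
          + (⁅A, Q⁆ + ⁅B, D⁆ + ⁅P, C⁆) := by
      rw [hKi, hKk]
      simp only [lie_add, add_lie]
      abel
    -- the nine pieces
    have hAC : ⁅A, C⁆ = ((z i)⁻¹ * (z k)⁻¹) • ⁅r i, r k⁆ := by
      rw [hA, hC, smul_lie, lie_smul, smul_smul]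
    have hAD : ⁅A, D⁆ = (-((z i)⁻¹ * (z k - z i)⁻¹)) • ⁅r i, r k⁆ := by
      rw [hA, hD, smul_lie, lie_smul, husymm k i, hru i k hik]
      module
    have hBC : ⁅B, C⁆ = (-((z i - z k)⁻¹ * (z k)⁻¹)) • ⁅r i, r k⁆ := by
      rw [hB, hC, smul_lie, lie_smul, hur i k hik]
      module
    have hAQ : ⁅A, Q⁆ = 0 := by
      rw [hA, hQ, smul_lie, my_lie_sum]
      rw [Finset.sum_eq_zero, smul_zero]
      intro l hl
      rw [lie_smul, hru0 i k l hik (hmem hl).1.symm (hmem hl).2.symm, smul_zero]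
    have hBD : ⁅B, D⁆ = 0 := by
      rw [hB, hD, smul_lie, lie_smul, husymm k i, lie_self, smul_zero, smul_zero]
    have hPC : ⁅P, C⁆ = 0 := by
      rw [hP, hC, my_sum_lie]
      apply Finset.sum_eq_zero
      intro j hj
      rw [smul_lie, lie_smul, ← lie_skew,
        hru0 k i j hik.symm (hmem hj).2.symm (hmem hj).1.symm, neg_zero,
        smul_zero, smul_zero]
    have hBQ : ⁅B, Q⁆ = ∑ l ∈ S, (-((z i - z k)⁻¹ * (z k - z l)⁻¹)) • ⁅u i k, u i l⁆ := by
      rw [hB, hQ, smul_lie, my_lie_sum, Finset.smul_sum]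
      refine Finset.sum_congr rfl fun l hl => ?_
      obtain ⟨hli, hlk⟩ := hmem hl
      have h1 : ⁅u i k, u k l⁆ = -⁅u i k, u i l⁆ := by
        have h2 := huu3 i k l hik hli.symm hlk.symm
        rw [lie_add] at h2
        exact eq_neg_of_add_eq_zero_right h2
      rw [lie_smul, h1]
      module
    have hPD : ⁅P, D⁆ = ∑ l ∈ S, (-((z k - z i)⁻¹ * (z i - z l)⁻¹)) • ⁅u i k, u i l⁆ := by
      rw [hP, hD, my_sum_lie]
      refine Finset.sum_congr rfl fun l hl => ?_
      obtain ⟨hli, hlk⟩ := hmem hl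
      have h1 : ⁅u i l, u k i⁆ = -⁅u i k, u i l⁆ := by
        rw [husymm k i, ← lie_skew]
      rw [smul_lie, lie_smul, h1]
      module
    have hPQ : ⁅P, Q⁆ = ∑ l ∈ S, ((z i - z l)⁻¹ * (z k - z l)⁻¹) • ⁅u i k, u i l⁆ := by
      rw [hP, hQ, my_sum_lie]
      refine Finset.sum_congr rfl fun j hj => ?_
      obtain ⟨hji, hjk⟩ := hmem hj
      rw [smul_lie, my_lie_sum]
      rw [Finset.sum_eq_single_of_mem j hj (fun l hl hlj => ?_)]
      · have h1 : ⁅u i j, u k j⁆ = ⁅u i k, u i j⁆ := by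
          have h2 := huu3 i j k hji.symm hik hjk
          rw [lie_add] at h2
          have h3 : ⁅u i j, u j k⁆ = -⁅u i j, u i k⁆ := eq_neg_of_add_eq_zero_right h2
          rw [husymm k j, h3, ← lie_skew, neg_neg]
        rw [lie_smul, h1]
        module
      · rw [lie_smul,
          huu0 i j k l hji.symm hik (hmem hl).1.symm hjk (Ne.symm hlj) (hmem hl).2.symm,
          smul_zero]
    -- assemble
    rw [hexp, hAC, hAD, hBC, hBQ, hPD, hPQ, hAQ, hBD, hPC]
    have hRs : ((z i)⁻¹ * (z k)⁻¹) • ⁅r i, r k⁆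
        + (-((z i)⁻¹ * (z k - z i)⁻¹)) • ⁅r i, r k⁆
        + (-((z i - z k)⁻¹ * (z k)⁻¹)) • ⁅r i, r k⁆ = 0 := by
      rw [← add_smul, ← add_smul]
      have hsc : (z i)⁻¹ * (z k)⁻¹ + -((z i)⁻¹ * (z k - z i)⁻¹)
          + -((z i - z k)⁻¹ * (z k)⁻¹) = 0 := by
        field_simp [hz0 i, hz0 k, hzik, hzki]
        ring
      rw [hsc, zero_smul]
    have hsum : (∑ l ∈ S, (-((z i - z k)⁻¹ * (z k - z l)⁻¹)) • ⁅u i k, u i l⁆)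
        + (∑ l ∈ S, (-((z k - z i)⁻¹ * (z i - z l)⁻¹)) • ⁅u i k, u i l⁆)
        + (∑ l ∈ S, ((z i - z l)⁻¹ * (z k - z l)⁻¹) • ⁅u i k, u i l⁆) = 0 := by
      rw [← Finset.sum_add_distrib, ← Finset.sum_add_distrib]
      apply Finset.sum_eq_zero
      intro l hl
      obtain ⟨hli, hlk⟩ := hmem hl
      have hzil : z i - z l ≠ 0 := sub_ne_zero.mpr (hz i l hli.symm)
      have hzkl : z k - z l ≠ 0 := sub_ne_zero.mpr (hz k l hlk.symm)
      rw [← add_smul, ← add_smul]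
      have hsc : -((z i - z k)⁻¹ * (z k - z l)⁻¹) + -((z k - z i)⁻¹ * (z i - z l)⁻¹)
          + (z i - z l)⁻¹ * (z k - z l)⁻¹ = 0 := by
        field_simp [hzik, hzki, hzil, hzkl]
        ring
      rw [hsc, zero_smul]
    rw [hRs, hsum]
    simp
  -- rewrite the Hamiltonians in terms of the K's
  have hH : ∀ c : Fin n → ℂ,
      ((∑ i, (c i / z i) • r i) +
        (∑ i, ∑ j ∈ Finset.univ.filter (fun j => i < j),
          ((c i - c j) / (z i - z j)) • (t i j + s i j))) = ∑ i, c i • K i := by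
    intro c
    have step1 : ∑ i, c i • K i
        = ∑ i, ((c i / z i) • r i
            + ∑ j ∈ Finset.univ.filter (fun j => j ≠ i), (c i * (z i - z j)⁻¹) • u i j) := by
      refine Finset.sum_congr rfl fun i _ => ?_
      simp only [hK, smul_add, Finset.smul_sum, smul_smul, div_eq_mul_inv]
    rw [step1, Finset.sum_add_distrib]
    have hoff : ∑ i, ∑ j ∈ Finset.univ.filter (fun j => i < j),
          ((c i - c j) / (z i - z j)) • (t i j + s i j)
        = ∑ i, ∑ j ∈ Finset.univ.filter (fun j => j ≠ i),
          (c i * (z i - z j)⁻¹) • u i j := by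
      have hsplitne : ∀ i : Fin n, Finset.univ.filter (fun j => j ≠ i)
          = Finset.univ.filter (fun j => i < j) ∪ Finset.univ.filter (fun j => j < i) := by
        intro i
        ext x
        simp only [Finset.mem_filter, Finset.mem_union, Finset.mem_univ, true_and]
        constructor
        · intro hx
          exact lt_or_gt_of_ne hx.symm
        · rintro (h | h)
          · exact h.ne'
          · exact h.ne
      have hdisj : ∀ i : Fin n, Disjoint (Finset.univ.filter (fun j => i < j))
          (Finset.univ.filter (fun j => j < i)) := by
        intro i
        rw [Finset.disjoint_left]
        intro x hx hx2
        simp only [Finset.mem_filter, Finset.mem_univ, true_and] at hx hx2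
        exact absurd hx2 (not_lt_of_gt hx)
      have hswap : ∑ i, ∑ j ∈ Finset.univ.filter (fun j => j < i),
            (c i * (z i - z j)⁻¹) • u i j
          = ∑ i, ∑ j ∈ Finset.univ.filter (fun j => i < j),
            (c j * (z j - z i)⁻¹) • u j i := by
        apply Finset.sum_comm'
        intro x y
        simp only [Finset.mem_univ, Finset.mem_filter, true_and, and_true, true_iff]
      calc ∑ i, ∑ j ∈ Finset.univ.filter (fun j => i < j),
            ((c i - c j) / (z i - z j)) • (t i j + s i j)
          = ∑ i, ∑ j ∈ Finset.univ.filter (fun j => i < j),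
            ((c i * (z i - z j)⁻¹) • u i j + (c j * (z j - z i)⁻¹) • u j i) := by
            refine Finset.sum_congr rfl fun i _ => Finset.sum_congr rfl fun j hj => ?_
            have hij : i ≠ j := by
              simp only [Finset.mem_filter, Finset.mem_univ, true_and] at hj
              exact hj.ne
            have hzij : z i - z j ≠ 0 := sub_ne_zero.mpr (hz i j hij)
            have hzji : z j - z i ≠ 0 := sub_ne_zero.mpr (hz j i hij.symm)
            rw [husymm j i, ← add_smul]
            have hsc : c i * (z i - z j)⁻¹ + c j * (z j - z i)⁻¹
                = (c i - c j) / (z i - z j) := by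
              field_simp [hzij, hzji]
              ring
            rw [hsc]
        _ = ∑ i, ∑ j ∈ Finset.univ.filter (fun j => i < j), (c i * (z i - z j)⁻¹) • u i j
            + ∑ i, ∑ j ∈ Finset.univ.filter (fun j => i < j), (c j * (z j - z i)⁻¹) • u j i := by
            rw [← Finset.sum_add_distrib]
            exact Finset.sum_congr rfl fun i _ => Finset.sum_add_distrib
        _ = ∑ i, ∑ j ∈ Finset.univ.filter (fun j => i < j), (c i * (z i - z j)⁻¹) • u i j
            + ∑ i, ∑ j ∈ Finset.univ.filter (fun j => j < i), (c i * (z i - z j)⁻¹) • u i j := by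
            rw [hswap]
        _ = ∑ i, ∑ j ∈ Finset.univ.filter (fun j => j ≠ i), (c i * (z i - z j)⁻¹) • u i j := by
            rw [← Finset.sum_add_distrib]
            refine Finset.sum_congr rfl fun i _ => ?_
            rw [hsplitne i, Finset.sum_union (hdisj i)]
    rw [hoff]
  rw [hH a, hH b, my_sum_lie]
  simp only [smul_lie, my_lie_sum, lie_smul, key, smul_zero, Finset.sum_const_zero]
end

section
/- Let L be a Lie algebra over ℂ with elements r_i, t_{ij} = t_{ji}, s_{ij} = s_{ji} (1 ≤ i < j ≤ 3) satisfying the B₃ holonomy relations. Set c_Δ = r₁ + r₂ + r₃ + Σ_{i<j}(t_{ij} + s_{ij}) and, for 1 ≤ i < j ≤ 3, c_{ij} = r_i + r_j + t_{ij} + s_{ij}. Then for any (x_i, x_j, x_{ij}) ∈ ℂ³, the three elements c_Δ, c_{ij}, and x_i r_i + x_j r_j + x_{ij} t_{ij} pairwise commute, so their span is an abelian Lie subalgebra. -/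
theorem b3_span_comm' {L : Type*} [LieRing L] [LieAlgebra ℂ L] {S : Set L}
    (h : ∀ a ∈ S, ∀ b ∈ S, ⁅a,b⁆ = 0) :
    ∀ x ∈ Submodule.span ℂ S, ∀ y ∈ Submodule.span ℂ S, ⁅x,y⁆ = 0 := by
  have key : ∀ a ∈ S, ∀ y ∈ Submodule.span ℂ S, ⁅a, y⁆ = 0 := by
    intro a ha y hy
    induction hy using Submodule.span_induction with
    | mem b hb => exact h a ha b hb
    | zero => simp
    | add y z _ _ hy hz => simp [hy, hz]
    | smul c y _ hy => simp [hy]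
  intro x hx y hy
  induction hx using Submodule.span_induction with
  | mem a ha => exact key a ha y hy
  | zero => simp
  | add a b _ _ ha hb => simp [add_lie, ha, hb]
  | smul c a _ ha => simp [smul_lie, ha]

theorem b3_conclude {L : Type*} [LieRing L] [LieAlgebra ℂ L] (c a b u v : L)
    (h1 : ⁅c,a⁆ = 0) (h2 : ⁅c,b⁆ = 0) (h3 : ⁅c,u⁆ = 0) (h4 : ⁅c,v⁆ = 0)
    (h5 : ⁅a, b + u + v⁆ = 0) (h5' : ⁅b, a + u + v⁆ = 0) (h6 : ⁅u, a + b + v⁆ = 0)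
    (xi xj xij : ℂ) :
    ⁅c, a + b + u + v⁆ = 0 ∧
    ⁅c, xi • a + xj • b + xij • u⁆ = 0 ∧
    ⁅a + b + u + v, xi • a + xj • b + xij • u⁆ = 0 ∧
    (∀ x ∈ Submodule.span ℂ ({c, a + b + u + v, xi • a + xj • b + xij • u} : Set L),
      ∀ y ∈ Submodule.span ℂ ({c, a + b + u + v, xi • a + xj • b + xij • u} : Set L),
      ⁅x, y⁆ = 0) := by
  have pa : ⁅a + b + u + v, a⁆ = 0 := by
    rw [← lie_skew]
    have e : ⁅a, a + b + u + v⁆ = ⁅a, a⁆ + ⁅a, b + u + v⁆ := by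
      simp only [lie_add]; abel
    rw [e, lie_self, h5, zero_add, neg_zero]
  have pb : ⁅a + b + u + v, b⁆ = 0 := by
    rw [← lie_skew]
    have e : ⁅b, a + b + u + v⁆ = ⁅b, b⁆ + ⁅b, a + u + v⁆ := by
      simp only [lie_add]; abel
    rw [e, lie_self, h5', zero_add, neg_zero]
  have pu : ⁅a + b + u + v, u⁆ = 0 := by
    rw [← lie_skew]
    have e : ⁅u, a + b + u + v⁆ = ⁅u, u⁆ + ⁅u, a + b + v⁆ := by
      simp only [lie_add]; abel
    rw [e, lie_self, h6, zero_add, neg_zero]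
  have g1 : ⁅c, a + b + u + v⁆ = 0 := by simp [lie_add, h1, h2, h3, h4]
  have g2 : ⁅c, xi • a + xj • b + xij • u⁆ = 0 := by simp [lie_add, lie_smul, h1, h2, h3]
  have g3 : ⁅a + b + u + v, xi • a + xj • b + xij • u⁆ = 0 := by
    simp [lie_add, lie_smul, pa, pb, pu]
  refine ⟨g1, g2, g3, b3_span_comm' ?_⟩
  intro x hx y hy
  simp only [Set.mem_insert_iff, Set.mem_singleton_iff] at hx hy
  rcases hx with rfl | rfl | rfl <;> rcases hy with rfl | rfl | rfl <;>
    first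
      | exact lie_self _
      | assumption
      | (rw [← lie_skew]; simp [g1, g2, g3])

/-- Under the `B₃` holonomy relations, for `i < j` the elements `c_Δ`,
`c_{ij} = r_i + r_j + t_{ij} + s_{ij}` and `x_i r_i + x_j r_j + x_{ij} t_{ij}`
pairwise commute, so their span is an abelian Lie subalgebra. -/
theorem b3_B2_component_abelian
    {L : Type*} [LieRing L] [LieAlgebra ℂ L]
    (r : Fin 3 → L) (t s : Fin 3 → Fin 3 → L)
    (htsymm : ∀ i j, t i j = t j i) (hssymm : ∀ i j, s i j = s j i)
    (hB2 : ∀ i j : Fin 3, i ≠ j →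
      ⁅r i, r j + t i j + s i j⁆ = 0 ∧
      ⁅t i j, r i + r j + s i j⁆ = 0 ∧
      ⁅s i j, r i + r j + t i j⁆ = 0)
    (hA2 : ∀ i j k : Fin 3, i ≠ j → i ≠ k → j ≠ k →
      ⁅t i j, t i k + t j k⁆ = 0 ∧
      ⁅t i j, s i k + s j k⁆ = 0 ∧
      ⁅s i j, t i k + s j k⁆ = 0 ∧
      ⁅r i, t j k⁆ = 0 ∧ ⁅r i, s j k⁆ = 0)
    (cΔ : L)
    (hcΔ : cΔ = (∑ i, r i) +
      ∑ i, ∑ j ∈ Finset.univ.filter (fun j => i < j), (t i j + s i j))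
    (i j : Fin 3) (hij : i < j) (xi xj xij : ℂ) :
    ⁅cΔ, r i + r j + t i j + s i j⁆ = 0 ∧
    ⁅cΔ, xi • r i + xj • r j + xij • t i j⁆ = 0 ∧
    ⁅r i + r j + t i j + s i j, xi • r i + xj • r j + xij • t i j⁆ = 0 ∧
    (∀ x ∈ Submodule.span ℂ
        ({cΔ, r i + r j + t i j + s i j, xi • r i + xj • r j + xij • t i j} : Set L),
      ∀ y ∈ Submodule.span ℂ
        ({cΔ, r i + r j + t i j + s i j, xi • r i + xj • r j + xij • t i j} : Set L),
      ⁅x, y⁆ = 0) := by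
  have hc : cΔ = r 0 + r 1 + r 2 + (t 0 1 + s 0 1) + (t 0 2 + s 0 2) + (t 1 2 + s 1 2) := by
    rw [hcΔ, Fin.sum_univ_three, Fin.sum_univ_three,
      show Finset.univ.filter (fun j => (0:Fin 3) < j) = {1, 2} from by decide,
      show Finset.univ.filter (fun j => (1:Fin 3) < j) = {2} from by decide,
      show Finset.univ.filter (fun j => (2:Fin 3) < j) = ∅ from by decide]
    simp [Finset.sum_pair (by decide : (1:Fin 3) ≠ 2)]
    abel
  -- flipped B2 relations
  have h5'01 : ⁅r 1, r 0 + t 0 1 + s 0 1⁆ = 0 := by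
    have := (hB2 1 0 (by decide)).1; rwa [htsymm 1 0, hssymm 1 0] at this
  have h5'02 : ⁅r 2, r 0 + t 0 2 + s 0 2⁆ = 0 := by
    have := (hB2 2 0 (by decide)).1; rwa [htsymm 2 0, hssymm 2 0] at this
  have h5'12 : ⁅r 2, r 1 + t 1 2 + s 1 2⁆ = 0 := by
    have := (hB2 2 1 (by decide)).1; rwa [htsymm 2 1, hssymm 2 1] at this
  -- centrality of cΔ
  have hcr0 : ⁅cΔ, r 0⁆ = 0 := by
    rw [← lie_skew]
    have e : ⁅r 0, cΔ⁆ = ⁅r 0, r 1 + t 0 1 + s 0 1⁆ + ⁅r 0, r 2 + t 0 2 + s 0 2⁆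
        + ⁅r 0, t 1 2⁆ + ⁅r 0, s 1 2⁆ + ⁅r 0, r 0⁆ := by
      rw [hc]; simp only [lie_add]; abel
    rw [e, (hB2 0 1 (by decide)).1, (hB2 0 2 (by decide)).1,
      (hA2 0 1 2 (by decide) (by decide) (by decide)).2.2.2.1,
      (hA2 0 1 2 (by decide) (by decide) (by decide)).2.2.2.2, lie_self]
    simp
  have hcr1 : ⁅cΔ, r 1⁆ = 0 := by
    rw [← lie_skew]
    have e : ⁅r 1, cΔ⁆ = ⁅r 1, r 0 + t 0 1 + s 0 1⁆ + ⁅r 1, r 2 + t 1 2 + s 1 2⁆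
        + ⁅r 1, t 0 2⁆ + ⁅r 1, s 0 2⁆ + ⁅r 1, r 1⁆ := by
      rw [hc]; simp only [lie_add]; abel
    rw [e, h5'01, (hB2 1 2 (by decide)).1,
      (hA2 1 0 2 (by decide) (by decide) (by decide)).2.2.2.1,
      (hA2 1 0 2 (by decide) (by decide) (by decide)).2.2.2.2, lie_self]
    simp
  have hcr2 : ⁅cΔ, r 2⁆ = 0 := by
    rw [← lie_skew]
    have e : ⁅r 2, cΔ⁆ = ⁅r 2, r 0 + t 0 2 + s 0 2⁆ + ⁅r 2, r 1 + t 1 2 + s 1 2⁆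
        + ⁅r 2, t 0 1⁆ + ⁅r 2, s 0 1⁆ + ⁅r 2, r 2⁆ := by
      rw [hc]; simp only [lie_add]; abel
    rw [e, h5'02, h5'12,
      (hA2 2 0 1 (by decide) (by decide) (by decide)).2.2.2.1,
      (hA2 2 0 1 (by decide) (by decide) (by decide)).2.2.2.2, lie_self]
    simp
  have hct01 : ⁅cΔ, t 0 1⁆ = 0 := by
    rw [← lie_skew]
    have hk : ⁅t 0 1, r 2⁆ = 0 := by
      rw [← lie_skew, (hA2 2 0 1 (by decide) (by decide) (by decide)).2.2.2.1, neg_zero]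
    have e : ⁅t 0 1, cΔ⁆ = ⁅t 0 1, r 0 + r 1 + s 0 1⁆ + ⁅t 0 1, t 0 2 + t 1 2⁆
        + ⁅t 0 1, s 0 2 + s 1 2⁆ + ⁅t 0 1, t 0 1⁆ + ⁅t 0 1, r 2⁆ := by
      rw [hc]; simp only [lie_add]; abel
    rw [e, (hB2 0 1 (by decide)).2.1,
      (hA2 0 1 2 (by decide) (by decide) (by decide)).1,
      (hA2 0 1 2 (by decide) (by decide) (by decide)).2.1, lie_self, hk]
    simp
  have hct02 : ⁅cΔ, t 0 2⁆ = 0 := by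
    rw [← lie_skew]
    have hk : ⁅t 0 2, r 1⁆ = 0 := by
      rw [← lie_skew, (hA2 1 0 2 (by decide) (by decide) (by decide)).2.2.2.1, neg_zero]
    have w2 : ⁅t 0 2, t 0 1 + t 1 2⁆ = 0 := by
      have := (hA2 0 2 1 (by decide) (by decide) (by decide)).1
      rwa [htsymm 2 1] at this
    have w3 : ⁅t 0 2, s 0 1 + s 1 2⁆ = 0 := by
      have := (hA2 0 2 1 (by decide) (by decide) (by decide)).2.1
      rwa [hssymm 2 1] at this
    have e : ⁅t 0 2, cΔ⁆ = ⁅t 0 2, r 0 + r 2 + s 0 2⁆ + ⁅t 0 2, t 0 1 + t 1 2⁆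
        + ⁅t 0 2, s 0 1 + s 1 2⁆ + ⁅t 0 2, t 0 2⁆ + ⁅t 0 2, r 1⁆ := by
      rw [hc]; simp only [lie_add]; abel
    rw [e, (hB2 0 2 (by decide)).2.1, w2, w3, lie_self, hk]
    simp
  have hct12 : ⁅cΔ, t 1 2⁆ = 0 := by
    rw [← lie_skew]
    have hk : ⁅t 1 2, r 0⁆ = 0 := by
      rw [← lie_skew, (hA2 0 1 2 (by decide) (by decide) (by decide)).2.2.2.1, neg_zero]
    have w2 : ⁅t 1 2, t 0 1 + t 0 2⁆ = 0 := by
      have := (hA2 1 2 0 (by decide) (by decide) (by decide)).1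
      rwa [htsymm 1 0, htsymm 2 0] at this
    have w3 : ⁅t 1 2, s 0 1 + s 0 2⁆ = 0 := by
      have := (hA2 1 2 0 (by decide) (by decide) (by decide)).2.1
      rwa [hssymm 1 0, hssymm 2 0] at this
    have e : ⁅t 1 2, cΔ⁆ = ⁅t 1 2, r 1 + r 2 + s 1 2⁆ + ⁅t 1 2, t 0 1 + t 0 2⁆
        + ⁅t 1 2, s 0 1 + s 0 2⁆ + ⁅t 1 2, t 1 2⁆ + ⁅t 1 2, r 0⁆ := by
      rw [hc]; simp only [lie_add]; abel
    rw [e, (hB2 1 2 (by decide)).2.1, w2, w3, lie_self, hk]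
    simp
  have hcs01 : ⁅cΔ, s 0 1⁆ = 0 := by
    rw [← lie_skew]
    have hk : ⁅s 0 1, r 2⁆ = 0 := by
      rw [← lie_skew, (hA2 2 0 1 (by decide) (by decide) (by decide)).2.2.2.2, neg_zero]
    have w3 : ⁅s 0 1, t 1 2 + s 0 2⁆ = 0 := by
      have := (hA2 1 0 2 (by decide) (by decide) (by decide)).2.2.1
      rwa [hssymm 1 0] at this
    have e : ⁅s 0 1, cΔ⁆ = ⁅s 0 1, r 0 + r 1 + t 0 1⁆ + ⁅s 0 1, t 0 2 + s 1 2⁆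
        + ⁅s 0 1, t 1 2 + s 0 2⁆ + ⁅s 0 1, s 0 1⁆ + ⁅s 0 1, r 2⁆ := by
      rw [hc]; simp only [lie_add]; abel
    rw [e, (hB2 0 1 (by decide)).2.2,
      (hA2 0 1 2 (by decide) (by decide) (by decide)).2.2.1, w3, lie_self, hk]
    simp
  have hcs02 : ⁅cΔ, s 0 2⁆ = 0 := by
    rw [← lie_skew]
    have hk : ⁅s 0 2, r 1⁆ = 0 := by
      rw [← lie_skew, (hA2 1 0 2 (by decide) (by decide) (by decide)).2.2.2.2, neg_zero]
    have w2 : ⁅s 0 2, t 0 1 + s 1 2⁆ = 0 := by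
      have := (hA2 0 2 1 (by decide) (by decide) (by decide)).2.2.1
      rwa [hssymm 2 1] at this
    have w3 : ⁅s 0 2, t 1 2 + s 0 1⁆ = 0 := by
      have := (hA2 2 0 1 (by decide) (by decide) (by decide)).2.2.1
      rwa [hssymm 2 0, htsymm 2 1] at this
    have e : ⁅s 0 2, cΔ⁆ = ⁅s 0 2, r 0 + r 2 + t 0 2⁆ + ⁅s 0 2, t 0 1 + s 1 2⁆
        + ⁅s 0 2, t 1 2 + s 0 1⁆ + ⁅s 0 2, s 0 2⁆ + ⁅s 0 2, r 1⁆ := by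
      rw [hc]; simp only [lie_add]; abel
    rw [e, (hB2 0 2 (by decide)).2.2, w2, w3, lie_self, hk]
    simp
  have hcs12 : ⁅cΔ, s 1 2⁆ = 0 := by
    rw [← lie_skew]
    have hk : ⁅s 1 2, r 0⁆ = 0 := by
      rw [← lie_skew, (hA2 0 1 2 (by decide) (by decide) (by decide)).2.2.2.2, neg_zero]
    have w2 : ⁅s 1 2, t 0 1 + s 0 2⁆ = 0 := by
      have := (hA2 1 2 0 (by decide) (by decide) (by decide)).2.2.1
      rwa [htsymm 1 0, hssymm 2 0] at this
    have w3 : ⁅s 1 2, t 0 2 + s 0 1⁆ = 0 := by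
      have := (hA2 2 1 0 (by decide) (by decide) (by decide)).2.2.1
      rwa [hssymm 2 1, htsymm 2 0, hssymm 1 0] at this
    have e : ⁅s 1 2, cΔ⁆ = ⁅s 1 2, r 1 + r 2 + t 1 2⁆ + ⁅s 1 2, t 0 1 + s 0 2⁆
        + ⁅s 1 2, t 0 2 + s 0 1⁆ + ⁅s 1 2, s 1 2⁆ + ⁅s 1 2, r 0⁆ := by
      rw [hc]; simp only [lie_add]; abel
    rw [e, (hB2 1 2 (by decide)).2.2, w2, w3, lie_self, hk]
    simp
  fin_cases i <;> fin_cases j <;> first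
    | exact absurd hij (by decide)
    | exact b3_conclude cΔ (r 0) (r 1) (t 0 1) (s 0 1) hcr0 hcr1 hct01 hcs01
        (hB2 0 1 (by decide)).1 h5'01 (hB2 0 1 (by decide)).2.1 xi xj xij
    | exact b3_conclude cΔ (r 0) (r 2) (t 0 2) (s 0 2) hcr0 hcr2 hct02 hcs02
        (hB2 0 2 (by decide)).1 h5'02 (hB2 0 2 (by decide)).2.1 xi xj xij
    | exact b3_conclude cΔ (r 1) (r 2) (t 1 2) (s 1 2) hcr1 hcr2 hct12 hcs12
        (hB2 1 2 (by decide)).1 h5'12 (hB2 1 2 (by decide)).2.1 xi xj xij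
end

section
/- Let L be a Lie algebra over ℂ with elements r_i, t_{ij} = t_{ji}, s_{ij} = s_{ji} (1 ≤ i < j ≤ 3) satisfying the B₃ holonomy relations. Set c_Δ = r₁ + r₂ + r₃ + Σ_{i<j}(t_{ij} + s_{ij}). Then for any 1 ≤ i < j ≤ 3 and any (y_i, y_j) ∈ ℂ², the three elements c_Δ, r₁ + r₂ + r₃ + t_{ij} + s_{ij}, and y_i t_{ij} + y_j s_{ij} pairwise commute, so their span is an abelian Lie subalgebra. -/
private def b3F {L : Type*} [LieRing L] (r : Fin 3 → L) (t s : Fin 3 → Fin 3 → L)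
    (a b c : Fin 3) : L :=
  r a + r b + r c + (t a b + s a b) + (t a c + s a c) + (t b c + s b c)

private lemma b3F_r {L : Type*} [LieRing L]
    (r : Fin 3 → L) (t s : Fin 3 → Fin 3 → L)
    (hB2 : ∀ i j : Fin 3, i ≠ j →
      ⁅r i, r j + t i j + s i j⁆ = 0 ∧
      ⁅t i j, r i + r j + s i j⁆ = 0 ∧
      ⁅s i j, r i + r j + t i j⁆ = 0)
    (hA2 : ∀ i j k : Fin 3, i ≠ j → i ≠ k → j ≠ k →
      ⁅t i j, t i k + t j k⁆ = 0 ∧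
      ⁅t i j, s i k + s j k⁆ = 0 ∧
      ⁅s i j, t i k + s j k⁆ = 0 ∧
      ⁅r i, t j k⁆ = 0 ∧ ⁅r i, s j k⁆ = 0)
    (a b c : Fin 3) (hab : a ≠ b) (hac : a ≠ c) (hbc : b ≠ c) :
    ⁅r a, b3F r t s a b c⁆ = 0 := by
  have h1 := (hB2 a b hab).1
  have h2 := (hB2 a c hac).1
  have h3 := (hA2 a b c hab hac hbc).2.2.2.1
  have h4 := (hA2 a b c hab hac hbc).2.2.2.2
  rw [show b3F r t s a b c =
      (r b + t a b + s a b) + (r c + t a c + s a c) + t b c + s b c + r a from by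
    unfold b3F; abel]
  rw [lie_add, lie_add, lie_add, lie_add, h1, h2, h3, h4, lie_self]
  simp

private lemma b3F_t {L : Type*} [LieRing L]
    (r : Fin 3 → L) (t s : Fin 3 → Fin 3 → L)
    (hB2 : ∀ i j : Fin 3, i ≠ j →
      ⁅r i, r j + t i j + s i j⁆ = 0 ∧
      ⁅t i j, r i + r j + s i j⁆ = 0 ∧
      ⁅s i j, r i + r j + t i j⁆ = 0)
    (hA2 : ∀ i j k : Fin 3, i ≠ j → i ≠ k → j ≠ k →
      ⁅t i j, t i k + t j k⁆ = 0 ∧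
      ⁅t i j, s i k + s j k⁆ = 0 ∧
      ⁅s i j, t i k + s j k⁆ = 0 ∧
      ⁅r i, t j k⁆ = 0 ∧ ⁅r i, s j k⁆ = 0)
    (a b c : Fin 3) (hab : a ≠ b) (hac : a ≠ c) (hbc : b ≠ c) :
    ⁅t a b, b3F r t s a b c⁆ = 0 := by
  have h1 := (hB2 a b hab).2.1
  have h2 := (hA2 a b c hab hac hbc).1
  have h3 := (hA2 a b c hab hac hbc).2.1
  have h4 : ⁅t a b, r c⁆ = 0 := by
    rw [← lie_skew, (hA2 c a b hac.symm hbc.symm hab).2.2.2.1, neg_zero]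
  rw [show b3F r t s a b c =
      (r a + r b + s a b) + (t a c + t b c) + (s a c + s b c) + r c + t a b from by
    unfold b3F; abel]
  rw [lie_add, lie_add, lie_add, lie_add, h1, h2, h3, h4, lie_self]
  simp

private lemma b3F_s {L : Type*} [LieRing L]
    (r : Fin 3 → L) (t s : Fin 3 → Fin 3 → L)
    (hssymm : ∀ i j, s i j = s j i)
    (hB2 : ∀ i j : Fin 3, i ≠ j →
      ⁅r i, r j + t i j + s i j⁆ = 0 ∧
      ⁅t i j, r i + r j + s i j⁆ = 0 ∧
      ⁅s i j, r i + r j + t i j⁆ = 0)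
    (hA2 : ∀ i j k : Fin 3, i ≠ j → i ≠ k → j ≠ k →
      ⁅t i j, t i k + t j k⁆ = 0 ∧
      ⁅t i j, s i k + s j k⁆ = 0 ∧
      ⁅s i j, t i k + s j k⁆ = 0 ∧
      ⁅r i, t j k⁆ = 0 ∧ ⁅r i, s j k⁆ = 0)
    (a b c : Fin 3) (hab : a ≠ b) (hac : a ≠ c) (hbc : b ≠ c) :
    ⁅s a b, b3F r t s a b c⁆ = 0 := by
  have h1 := (hB2 a b hab).2.2
  have h2 := (hA2 a b c hab hac hbc).2.2.1
  have h3 := (hA2 b a c hab.symm hbc hac).2.2.1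
  rw [hssymm b a] at h3
  have h4 : ⁅s a b, r c⁆ = 0 := by
    rw [← lie_skew, (hA2 c a b hac.symm hbc.symm hab).2.2.2.2, neg_zero]
  rw [show b3F r t s a b c =
      (r a + r b + t a b) + (t a c + s b c) + (t b c + s a c) + r c + s a b from by
    unfold b3F; abel]
  rw [lie_add, lie_add, lie_add, lie_add, h1, h2, h3, h4, lie_self]
  simp

private lemma b3X_t {L : Type*} [LieRing L]
    (r : Fin 3 → L) (t s : Fin 3 → Fin 3 → L)
    (hB2 : ∀ i j : Fin 3, i ≠ j →
      ⁅r i, r j + t i j + s i j⁆ = 0 ∧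
      ⁅t i j, r i + r j + s i j⁆ = 0 ∧
      ⁅s i j, r i + r j + t i j⁆ = 0)
    (hA2 : ∀ i j k : Fin 3, i ≠ j → i ≠ k → j ≠ k →
      ⁅t i j, t i k + t j k⁆ = 0 ∧
      ⁅t i j, s i k + s j k⁆ = 0 ∧
      ⁅s i j, t i k + s j k⁆ = 0 ∧
      ⁅r i, t j k⁆ = 0 ∧ ⁅r i, s j k⁆ = 0)
    (a b c : Fin 3) (hab : a ≠ b) (hac : a ≠ c) (hbc : b ≠ c) :
    ⁅t a b, r a + r b + r c + t a b + s a b⁆ = 0 := by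
  have h1 := (hB2 a b hab).2.1
  have h4 : ⁅t a b, r c⁆ = 0 := by
    rw [← lie_skew, (hA2 c a b hac.symm hbc.symm hab).2.2.2.1, neg_zero]
  rw [show r a + r b + r c + t a b + s a b =
      (r a + r b + s a b) + r c + t a b from by abel]
  rw [lie_add, lie_add, h1, h4, lie_self]
  simp

private lemma b3X_s {L : Type*} [LieRing L]
    (r : Fin 3 → L) (t s : Fin 3 → Fin 3 → L)
    (hB2 : ∀ i j : Fin 3, i ≠ j →
      ⁅r i, r j + t i j + s i j⁆ = 0 ∧
      ⁅t i j, r i + r j + s i j⁆ = 0 ∧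
      ⁅s i j, r i + r j + t i j⁆ = 0)
    (hA2 : ∀ i j k : Fin 3, i ≠ j → i ≠ k → j ≠ k →
      ⁅t i j, t i k + t j k⁆ = 0 ∧
      ⁅t i j, s i k + s j k⁆ = 0 ∧
      ⁅s i j, t i k + s j k⁆ = 0 ∧
      ⁅r i, t j k⁆ = 0 ∧ ⁅r i, s j k⁆ = 0)
    (a b c : Fin 3) (hab : a ≠ b) (hac : a ≠ c) (hbc : b ≠ c) :
    ⁅s a b, r a + r b + r c + t a b + s a b⁆ = 0 := by
  have h1 := (hB2 a b hab).2.2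
  have h4 : ⁅s a b, r c⁆ = 0 := by
    rw [← lie_skew, (hA2 c a b hac.symm hbc.symm hab).2.2.2.2, neg_zero]
  rw [show r a + r b + r c + t a b + s a b =
      (r a + r b + t a b) + r c + s a b from by abel]
  rw [lie_add, lie_add, h1, h4, lie_self]
  simp

private lemma b3span3 {L : Type*} [LieRing L] [LieAlgebra ℂ L] {a b c : L}
    (hab : ⁅a, b⁆ = 0) (hac : ⁅a, c⁆ = 0) (hbc : ⁅b, c⁆ = 0) :
    ∀ x ∈ Submodule.span ℂ ({a, b, c} : Set L),
      ∀ y ∈ Submodule.span ℂ ({a, b, c} : Set L), ⁅x, y⁆ = 0 := by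
  have hg : ∀ u ∈ ({a, b, c} : Set L), ∀ v ∈ ({a, b, c} : Set L), ⁅u, v⁆ = 0 := by
    rintro u hu v hv
    simp only [Set.mem_insert_iff, Set.mem_singleton_iff] at hu hv
    rcases hu with rfl | rfl | rfl <;> rcases hv with rfl | rfl | rfl <;>
      first
        | exact lie_self _
        | assumption
        | (rw [← lie_skew]; simp [hab, hac, hbc])
  intro x hx y hy
  have hx' : ∀ v ∈ ({a, b, c} : Set L), ⁅x, v⁆ = 0 := by
    induction hx using Submodule.span_induction with
    | mem u hu => exact hg u hu
    | zero => intro v _; simp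
    | add p q hp hq ihp ihq => intro v hv; rw [add_lie, ihp v hv, ihq v hv, add_zero]
    | smul m p hp ih => intro v hv; rw [smul_lie, ih v hv, smul_zero]
  induction hy using Submodule.span_induction with
  | mem v hv => exact hx' v hv
  | zero => simp
  | add p q hp hq ihp ihq => rw [lie_add, ihp, ihq, add_zero]
  | smul m p hp ih => rw [lie_smul, ih, smul_zero]


/-- Under the `B₃` holonomy relations, for `i < j` the elements `c_Δ`,
`r₁ + r₂ + r₃ + t_{ij} + s_{ij}` and `y_i t_{ij} + y_j s_{ij}` pairwise
commute, so their span is an abelian Lie subalgebra. -/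
theorem b3_A_curve_component_abelian
    {L : Type*} [LieRing L] [LieAlgebra ℂ L]
    (r : Fin 3 → L) (t s : Fin 3 → Fin 3 → L)
    (htsymm : ∀ i j, t i j = t j i) (hssymm : ∀ i j, s i j = s j i)
    (hB2 : ∀ i j : Fin 3, i ≠ j →
      ⁅r i, r j + t i j + s i j⁆ = 0 ∧
      ⁅t i j, r i + r j + s i j⁆ = 0 ∧
      ⁅s i j, r i + r j + t i j⁆ = 0)
    (hA2 : ∀ i j k : Fin 3, i ≠ j → i ≠ k → j ≠ k →
      ⁅t i j, t i k + t j k⁆ = 0 ∧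
      ⁅t i j, s i k + s j k⁆ = 0 ∧
      ⁅s i j, t i k + s j k⁆ = 0 ∧
      ⁅r i, t j k⁆ = 0 ∧ ⁅r i, s j k⁆ = 0)
    (cΔ : L)
    (hcΔ : cΔ = (∑ i, r i) +
      ∑ i, ∑ j ∈ Finset.univ.filter (fun j => i < j), (t i j + s i j))
    (i j : Fin 3) (hij : i < j) (yi yj : ℂ) :
    ⁅cΔ, (∑ i, r i) + t i j + s i j⁆ = 0 ∧
    ⁅cΔ, yi • t i j + yj • s i j⁆ = 0 ∧
    ⁅(∑ i, r i) + t i j + s i j, yi • t i j + yj • s i j⁆ = 0 ∧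
    (∀ x ∈ Submodule.span ℂ
        ({cΔ, (∑ i, r i) + t i j + s i j, yi • t i j + yj • s i j} : Set L),
      ∀ y ∈ Submodule.span ℂ
        ({cΔ, (∑ i, r i) + t i j + s i j, yi • t i j + yj • s i j} : Set L),
      ⁅x, y⁆ = 0) := by
  have hconc : cΔ = r 0 + r 1 + r 2 + (t 0 1 + s 0 1) + (t 0 2 + s 0 2) + (t 1 2 + s 1 2) := by
    rw [hcΔ, Fin.sum_univ_three, Fin.sum_univ_three,
      show (Finset.univ.filter (fun j => (0 : Fin 3) < j)) = {1, 2} from by decide,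
      show (Finset.univ.filter (fun j => (1 : Fin 3) < j)) = {2} from by decide,
      show (Finset.univ.filter (fun j => (2 : Fin 3) < j)) = ∅ from by decide]
    simp
    abel
  have hne : i ≠ j := hij.ne
  obtain ⟨k, hik, hjk, hE1, hE2, hE3⟩ :
      ∃ k, i ≠ k ∧ j ≠ k ∧ cΔ = b3F r t s i j k ∧ cΔ = b3F r t s j i k ∧
        cΔ = b3F r t s k i j := by
    rcases (by decide : ∀ a b : Fin 3, a < b →
        (a = 0 ∧ b = 1) ∨ (a = 0 ∧ b = 2) ∨ (a = 1 ∧ b = 2)) i j hij with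
      ⟨rfl, rfl⟩ | ⟨rfl, rfl⟩ | ⟨rfl, rfl⟩
    · exact ⟨2, by decide, by decide,
        by rw [hconc]; simp only [b3F, htsymm 1 0, hssymm 1 0, htsymm 2 0, hssymm 2 0,
          htsymm 2 1, hssymm 2 1]; try abel,
        by rw [hconc]; simp only [b3F, htsymm 1 0, hssymm 1 0, htsymm 2 0, hssymm 2 0,
          htsymm 2 1, hssymm 2 1]; try abel,
        by rw [hconc]; simp only [b3F, htsymm 1 0, hssymm 1 0, htsymm 2 0, hssymm 2 0,
          htsymm 2 1, hssymm 2 1]; try abel⟩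
    · exact ⟨1, by decide, by decide,
        by rw [hconc]; simp only [b3F, htsymm 1 0, hssymm 1 0, htsymm 2 0, hssymm 2 0,
          htsymm 2 1, hssymm 2 1]; try abel,
        by rw [hconc]; simp only [b3F, htsymm 1 0, hssymm 1 0, htsymm 2 0, hssymm 2 0,
          htsymm 2 1, hssymm 2 1]; try abel,
        by rw [hconc]; simp only [b3F, htsymm 1 0, hssymm 1 0, htsymm 2 0, hssymm 2 0,
          htsymm 2 1, hssymm 2 1]; try abel⟩
    · exact ⟨0, by decide, by decide,
        by rw [hconc]; simp only [b3F, htsymm 1 0, hssymm 1 0, htsymm 2 0, hssymm 2 0,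
          htsymm 2 1, hssymm 2 1]; try abel,
        by rw [hconc]; simp only [b3F, htsymm 1 0, hssymm 1 0, htsymm 2 0, hssymm 2 0,
          htsymm 2 1, hssymm 2 1]; try abel,
        by rw [hconc]; simp only [b3F, htsymm 1 0, hssymm 1 0, htsymm 2 0, hssymm 2 0,
          htsymm 2 1, hssymm 2 1]; try abel⟩
  have c_ri : ⁅cΔ, r i⁆ = 0 := by
    rw [← lie_skew, hE1, b3F_r r t s hB2 hA2 i j k hne hik hjk, neg_zero]
  have c_rj : ⁅cΔ, r j⁆ = 0 := by
    rw [← lie_skew, hE2, b3F_r r t s hB2 hA2 j i k hne.symm hjk hik, neg_zero]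
  have c_rk : ⁅cΔ, r k⁆ = 0 := by
    rw [← lie_skew, hE3, b3F_r r t s hB2 hA2 k i j hik.symm hjk.symm hne, neg_zero]
  have c_t : ⁅cΔ, t i j⁆ = 0 := by
    rw [← lie_skew, hE1, b3F_t r t s hB2 hA2 i j k hne hik hjk, neg_zero]
  have c_s : ⁅cΔ, s i j⁆ = 0 := by
    rw [← lie_skew, hE1, b3F_s r t s hssymm hB2 hA2 i j k hne hik hjk, neg_zero]
  have hset : ({i, j, k} : Finset (Fin 3)) = Finset.univ := by
    have hall : ∀ a b c : Fin 3, a ≠ b → a ≠ c → b ≠ c →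
        ({a, b, c} : Finset (Fin 3)) = Finset.univ := by decide
    exact hall i j k hne hik hjk
  have huniv : (∑ a, r a) = r i + r j + r k := by
    rw [← hset, Finset.sum_insert (by simp [hne, hik]),
      Finset.sum_insert (by simp [hjk]), Finset.sum_singleton, add_assoc]
  have H1 : ⁅cΔ, (∑ i, r i) + t i j + s i j⁆ = 0 := by
    rw [huniv]
    simp only [lie_add, c_ri, c_rj, c_rk, c_t, c_s, add_zero]
  have H2 : ⁅cΔ, yi • t i j + yj • s i j⁆ = 0 := by
    simp only [lie_add, lie_smul, c_t, c_s, smul_zero, add_zero]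
  have H3 : ⁅(∑ i, r i) + t i j + s i j, yi • t i j + yj • s i j⁆ = 0 := by
    have h3t : ⁅(∑ a, r a) + t i j + s i j, t i j⁆ = 0 := by
      rw [huniv, ← lie_skew, b3X_t r t s hB2 hA2 i j k hne hik hjk, neg_zero]
    have h3s : ⁅(∑ a, r a) + t i j + s i j, s i j⁆ = 0 := by
      rw [huniv, ← lie_skew, b3X_s r t s hB2 hA2 i j k hne hik hjk, neg_zero]
    simp only [lie_add, lie_smul, h3t, h3s, smul_zero, add_zero]
  exact ⟨H1, H2, H3, b3span3 H1 H2 H3⟩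
end
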